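/- arXiv:2104.07274 — 12 statements merged into one kernel-verified Lean document; each statement's English description precedes it below -/
import Mathlib

section
/- If a' is obtained from a composition a by permuting its terms, then a and a' are dominating equivalent: |D_n(a)| = |D_n(a')| for all positive integers n. -/
/-- `l` is a composition of `n`: a list of positive integers summing to `n`. -/
def IsComposition (n : ℕ) (l : List ℕ) : Prop :=
  (∀ x ∈ l, 0 < x) ∧ l.sum = n

/-- `b` dominates `a`: `b` has a subsequence whose terms are entrywise at least those of `a`. -/
def Dominates (b a : List ℕ) : Prop :=
  ∃ b' : List ℕ, b'.Sublist b ∧ List.Forall₂ (· ≤ ·) a b'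

/-- `D_n(a)`: the set of compositions of `n` dominating `a`. -/
def domSet (n : ℕ) (a : List ℕ) : Set (List ℕ) :=
  {b | IsComposition n b ∧ Dominates b a}

namespace DomPerm

lemma headI_cons_tail {d : List ℕ} (h : d ≠ []) : d.headI :: d.tail = d := by
  cases d with
  | nil => simp at h
  | cons a t => rfl

lemma dom_tail {b : List ℕ} {x : ℕ} {l : List ℕ} (h : Dominates b (x :: l)) :
    Dominates b l := by
  obtain ⟨b', hs, hf⟩ := h
  cases hf with
  | cons h1 h2 =>
    rename_i c s
    exact ⟨s, (List.sublist_cons_self c s).trans hs, h2⟩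

/-- Key greedy lemma. -/
lemma dom_cons_iff (x : ℕ) (l b : List ℕ) :
    Dominates b (x :: l) ↔
      b.dropWhile (· < x) ≠ [] ∧ Dominates ((b.dropWhile (· < x)).tail) l := by
  induction b with
  | nil =>
    simp only [List.dropWhile_nil, ne_eq, not_true_eq_false, false_and, iff_false]
    rintro ⟨b', hs, hf⟩
    cases hf with
    | cons h1 h2 => simp [List.sublist_nil] at hs
  | cons z t ih =>
    by_cases hz : z < x
    · rw [show (z :: t).dropWhile (· < x) = t.dropWhile (· < x) by
        simp [List.dropWhile_cons, hz]]
      rw [← ih]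
      constructor
      · rintro ⟨b', hs, hf⟩
        cases hf with
        | cons h1 h2 =>
          rename_i c s
          cases hs with
          | cons _ hs' => exact ⟨c :: s, hs', List.Forall₂.cons h1 h2⟩
          | cons_cons hs' => omega
      · rintro ⟨b', hs, hf⟩
        exact ⟨b', hs.trans (List.sublist_cons_self z t), hf⟩
    · rw [show (z :: t).dropWhile (· < x) = z :: t by
        simp [List.dropWhile_cons, hz]]
      simp only [ne_eq, List.cons_ne_nil, not_false_eq_true, true_and, List.tail_cons]
      constructor
      · rintro ⟨b', hs, hf⟩
        cases hf with
        | cons h1 h2 =>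
          rename_i c s
          cases hs with
          | cons _ hs' => exact dom_tail ⟨c :: s, hs', List.Forall₂.cons h1 h2⟩
          | cons_cons _ hs' => exact ⟨s, hs', h2⟩
      · rintro ⟨b', hs, hf⟩
        exact ⟨z :: b', hs.cons₂ z, List.Forall₂.cons (by omega) hf⟩

lemma chop_eq (x : ℕ) {u : List ℕ} {c : ℕ} (r : List ℕ)
    (hu : ∀ z ∈ u, z < x) (hc : ¬ c < x) :
    (u ++ c :: r).takeWhile (· < x) = u ∧ (u ++ c :: r).dropWhile (· < x) = c :: r := by
  induction u with
  | nil => simp [List.takeWhile_cons, List.dropWhile_cons, hc]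
  | cons a u ih =>
    have ha : a < x := hu a (by simp)
    have := ih (fun z hz => hu z (by simp [hz]))
    simp [List.takeWhile_cons, List.dropWhile_cons, ha, this.1, this.2]

lemma headI_dropWhile_lt (x : ℕ) (b : List ℕ) (hne : b.dropWhile (· < x) ≠ []) :
    ¬ (b.dropWhile (· < x)).headI < x := by
  induction b with
  | nil => simp at hne
  | cons z t ih =>
    by_cases hz : z < x
    · rw [show (z :: t).dropWhile (· < x) = t.dropWhile (· < x) by
        simp [List.dropWhile_cons, hz]] at hne ⊢
      exact ih hne
    · rw [show (z :: t).dropWhile (· < x) = z :: t by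
        simp [List.dropWhile_cons, hz]]
      simpa using hz

/-- the data invariantly carried by our bijections -/
def Good (l l' : List ℕ) (f g : List ℕ → List ℕ) : Prop :=
  ∀ b : List ℕ, (∀ z ∈ b, 0 < z) → Dominates b l →
    (∀ z ∈ f b, 0 < z) ∧ (f b).sum = b.sum ∧ Dominates (f b) l' ∧ g (f b) = b

/-- one greedy step of a map -/
def step (x : ℕ) (f : List ℕ → List ℕ) (b : List ℕ) : List ℕ :=
  b.takeWhile (· < x) ++ (b.dropWhile (· < x)).headI :: f ((b.dropWhile (· < x)).tail)

lemma step_spec (x : ℕ) (f : List ℕ → List ℕ) {b : List ℕ}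
    (hne : b.dropWhile (· < x) ≠ []) :
    ∃ u c r, b = u ++ c :: r ∧ (∀ z ∈ u, z < x) ∧ ¬ c < x ∧
      (b.dropWhile (· < x)).tail = r ∧
      step x f b = u ++ c :: f r := by
  refine ⟨b.takeWhile (· < x), (b.dropWhile (· < x)).headI, (b.dropWhile (· < x)).tail,
    ?_, ?_, ?_, rfl, rfl⟩
  · conv_lhs => rw [← List.takeWhile_append_dropWhile (p := fun z => decide (z < x)) (l := b)]
    rw [headI_cons_tail hne]
  · intro z hz; simpa using List.mem_takeWhile_imp hz
  · exact headI_dropWhile_lt x b hne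

lemma good_id (l : List ℕ) : Good l l id id := by
  intro b hb hd
  exact ⟨hb, rfl, hd, rfl⟩

lemma good_comp {l l' l'' : List ℕ} {f g f' g' : List ℕ → List ℕ}
    (h1 : Good l l' f g) (h2 : Good l' l'' f' g') :
    Good l l'' (f' ∘ f) (g ∘ g') := by
  intro b hb hd
  obtain ⟨p1, s1, d1, i1⟩ := h1 b hb hd
  obtain ⟨p2, s2, d2, i2⟩ := h2 (f b) p1 d1
  exact ⟨p2, by simp [s2, s1], d2, by simp [i2, i1]⟩

lemma good_step (x : ℕ) {l l' : List ℕ} {f g}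
    (hf : Good l l' f g) : Good (x :: l) (x :: l') (step x f) (step x g) := by
  intro b hb hd
  rw [dom_cons_iff] at hd
  obtain ⟨hne, hdt⟩ := hd
  obtain ⟨u, c, r, hbe, hux, hcx, hrt, hst⟩ := step_spec x f hne
  rw [hrt] at hdt
  have hrpos : ∀ z ∈ r, 0 < z := fun z hz => hb z (by rw [hbe]; simp [hz])
  obtain ⟨p1, s1, d1, i1⟩ := hf r hrpos hdt
  have hch := chop_eq x (f r) hux hcx
  refine ⟨?_, ?_, ?_, ?_⟩
  · rw [hst]; intro z hz
    rcases List.mem_append.1 hz with h | h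
    · exact hb z (by rw [hbe]; simp [h])
    · rcases List.mem_cons.1 h with h | h
      · subst h; exact hb z (by rw [hbe]; simp)
      · exact p1 z h
  · rw [hst, hbe]; simp [List.sum_append, s1]
  · rw [hst, dom_cons_iff, hch.2]
    exact ⟨by simp, by simpa using d1⟩
  · rw [hst]
    show step x g (u ++ c :: f r) = b
    unfold step
    rw [hch.1, hch.2]
    simp only [List.headI_cons, List.tail_cons]
    rw [i1, ← hbe]

/-- swap the first two greedy blocks -/
def swapMap (x y : ℕ) (b : List ℕ) : List ℕ :=
  (b.dropWhile (· < x)).tail.takeWhile (· < y) ++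
    ((b.dropWhile (· < x)).tail.dropWhile (· < y)).headI ::
      b.takeWhile (· < x) ++ (b.dropWhile (· < x)).headI ::
        ((b.dropWhile (· < x)).tail.dropWhile (· < y)).tail

lemma swapMap_eq (x y : ℕ) {u₁ u₂ r : List ℕ} {c₁ c₂ : ℕ}
    (h1 : ∀ z ∈ u₁, z < x) (h2 : ¬ c₁ < x) (h3 : ∀ z ∈ u₂, z < y) (h4 : ¬ c₂ < y) :
    swapMap x y (u₁ ++ c₁ :: (u₂ ++ c₂ :: r)) = u₂ ++ c₂ :: (u₁ ++ c₁ :: r) := by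
  have A := chop_eq x (u₂ ++ c₂ :: r) h1 h2
  have B := chop_eq y r h3 h4
  unfold swapMap
  rw [A.1, A.2]
  simp only [List.headI_cons, List.tail_cons]
  rw [B.1, B.2]
  simp

lemma decomp2 (x y : ℕ) {l b : List ℕ} (hd : Dominates b (x :: y :: l)) :
    ∃ u₁ c₁ u₂ c₂ r, b = u₁ ++ c₁ :: (u₂ ++ c₂ :: r) ∧
      (∀ z ∈ u₁, z < x) ∧ ¬ c₁ < x ∧ (∀ z ∈ u₂, z < y) ∧ ¬ c₂ < y ∧ Dominates r l := by
  rw [dom_cons_iff] at hd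
  obtain ⟨hne1, hd2⟩ := hd
  obtain ⟨u₁, c₁, r₁, hbe, hu1, hc1, hrt, _⟩ := step_spec x id hne1
  rw [hrt] at hd2
  rw [dom_cons_iff] at hd2
  obtain ⟨hne2, hd3⟩ := hd2
  obtain ⟨u₂, c₂, r, hre, hu2, hc2, hrt2, _⟩ := step_spec y id hne2
  rw [hrt2] at hd3
  exact ⟨u₁, c₁, u₂, c₂, r, by rw [hbe, hre], hu1, hc1, hu2, hc2, hd3⟩

lemma good_swap (x y : ℕ) (l : List ℕ) :
    Good (x :: y :: l) (y :: x :: l) (swapMap x y) (swapMap y x) := by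
  intro b hb hd
  obtain ⟨u₁, c₁, u₂, c₂, r, hbe, hu1, hc1, hu2, hc2, hdr⟩ := decomp2 x y hd
  have hsw : swapMap x y b = u₂ ++ c₂ :: (u₁ ++ c₁ :: r) := by
    rw [hbe]; exact swapMap_eq x y hu1 hc1 hu2 hc2
  refine ⟨?_, ?_, ?_, ?_⟩
  · intro z hz
    apply hb
    rw [hsw] at hz
    rw [hbe]
    simp only [List.mem_append, List.mem_cons] at hz ⊢
    tauto
  · rw [hsw, hbe]
    simp [List.sum_append]
    omega
  · rw [hsw, dom_cons_iff, (chop_eq y (u₁ ++ c₁ :: r) hu2 hc2).2]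
    refine ⟨by simp, ?_⟩
    simp only [List.tail_cons]
    rw [dom_cons_iff, (chop_eq x r hu1 hc1).2]
    exact ⟨by simp, by simpa using hdr⟩
  · rw [hsw, swapMap_eq y x hu2 hc2 hu1 hc1, hbe]

lemma exists_good {l l' : List ℕ} (h : l.Perm l') :
    ∃ f g, Good l l' f g ∧ Good l' l g f := by
  induction h with
  | nil => exact ⟨id, id, good_id [], good_id []⟩
  | cons x h ih =>
    obtain ⟨f, g, hf, hg⟩ := ih
    exact ⟨step x f, step x g, good_step x hf, good_step x hg⟩
  | swap x y t =>
    exact ⟨swapMap y x, swapMap x y, good_swap y x t, good_swap x y t⟩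
  | trans h1 h2 ih1 ih2 =>
    obtain ⟨f, g, hf, hg⟩ := ih1
    obtain ⟨f', g', hf', hg'⟩ := ih2
    exact ⟨f' ∘ f, g ∘ g', good_comp hf hf', good_comp hg' hg⟩

end DomPerm

theorem domEquiv_of_perm (a a' : List ℕ) (ha : ∀ x ∈ a, 0 < x)
    (hperm : a.Perm a') :
    ∀ n : ℕ, 0 < n → (domSet n a).ncard = (domSet n a').ncard := by
  obtain ⟨f, g, hf, hg⟩ := DomPerm.exists_good hperm
  intro n hn
  have hbij : Set.BijOn f (domSet n a) (domSet n a') := by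
    refine ⟨?_, ?_, ?_⟩
    · rintro b ⟨⟨hp, hs⟩, hd⟩
      obtain ⟨p1, s1, d1, _⟩ := hf b hp hd
      exact ⟨⟨p1, by rw [s1, hs]⟩, d1⟩
    · rintro b₁ ⟨⟨hp1, -⟩, hd1⟩ b₂ ⟨⟨hp2, -⟩, hd2⟩ he
      have i1 := (hf b₁ hp1 hd1).2.2.2
      have i2 := (hf b₂ hp2 hd2).2.2.2
      rw [← i1, ← i2, he]
    · rintro b ⟨⟨hp, hs⟩, hd⟩
      obtain ⟨p1, s1, d1, i1⟩ := hg b hp hd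
      exact ⟨g b, ⟨⟨p1, by rw [s1, hs]⟩, d1⟩, i1⟩
  rw [← hbij.image_eq, Set.ncard_image_of_injOn hbij.injOn]
end

section
/- The compositions (a_1,...,a_{m-1},2) and (a_1,...,a_{m-1},1,1) are dominating equivalent: for every positive integer n, the number of compositions of n dominating (a_1,...,a_{m-1},2) equals the number dominating (a_1,...,a_{m-1},1,1). -/
namespace DomAux

/-- Greedy matcher: returns the suffix of `b` remaining after greedily embedding `a`. -/
def chomp : List ℕ → List ℕ → Option (List ℕ)
  | [], b => some b
  | _ :: _, [] => none
  | x :: xs, y :: ys => if x ≤ y then chomp xs ys else chomp (x :: xs) ys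

lemma chomp_isSome (b : List ℕ) : ∀ a b' : List ℕ, b'.Sublist b →
    List.Forall₂ (· ≤ ·) a b' → (chomp a b).isSome := by
  induction b with
  | nil =>
    intro a b' hs hf
    rcases List.sublist_nil.mp hs
    cases hf
    simp [chomp]
  | cons z bs ih =>
    intro a b' hs hf
    cases hf with
    | nil => simp [chomp]
    | @cons x y xs ys hxy hf' =>
      cases hs with
      | cons _ hs' =>
        by_cases hxz : x ≤ z
        · simpa [chomp, hxz] using ih xs ys ((List.sublist_cons_self y ys).trans hs') hf'
        · simpa [chomp, hxz] using ih (x :: xs) (y :: ys) hs' (List.Forall₂.cons hxy hf')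
      | cons_cons _ hs' =>
        simpa [chomp, hxy] using ih xs ys hs' hf'

lemma dominates_of_chomp : ∀ b a r : List ℕ, chomp a b = some r → Dominates b a := by
  intro b
  induction b with
  | nil =>
    intro a r h
    cases a with
    | nil => exact ⟨[], List.Sublist.refl _, List.Forall₂.nil⟩
    | cons x xs => simp [chomp] at h
  | cons z bs ih =>
    intro a r h
    cases a with
    | nil => exact ⟨[], List.nil_sublist _, List.Forall₂.nil⟩
    | cons x xs =>
      by_cases hxz : x ≤ z
      · simp only [chomp, if_pos hxz] at h
        obtain ⟨b', hs, hf⟩ := ih xs r h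
        exact ⟨z :: b', hs.cons₂ z, List.Forall₂.cons hxz hf⟩
      · simp only [chomp, if_neg hxz] at h
        obtain ⟨b', hs, hf⟩ := ih (x :: xs) r h
        exact ⟨b', hs.cons z, hf⟩

lemma dominates_iff_chomp (b a : List ℕ) : Dominates b a ↔ (chomp a b).isSome := by
  constructor
  · rintro ⟨b', hs, hf⟩; exact chomp_isSome b a b' hs hf
  · intro h
    obtain ⟨r, hr⟩ := Option.isSome_iff_exists.mp h
    exact dominates_of_chomp b a r hr

lemma chomp_append_right : ∀ p a r s : List ℕ, chomp a p = some r →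
    chomp a (p ++ s) = some (r ++ s) := by
  intro p
  induction p with
  | nil =>
    intro a r s h
    cases a with
    | nil => injection h with h; simp [chomp, ← h]
    | cons x xs => simp [chomp] at h
  | cons z ps ih =>
    intro a r s h
    cases a with
    | nil =>
      injection h with h; simp [chomp, ← h]
    | cons x xs =>
      by_cases hxz : x ≤ z
      · simp only [chomp, if_pos hxz] at h
        simpa [chomp, hxz] using ih xs r s h
      · simp only [chomp, if_neg hxz] at h
        simpa [chomp, hxz] using ih (x :: xs) r s h

lemma chomp_decomp : ∀ b a r : List ℕ, chomp a b = some r →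
    ∃ p, b = p ++ r ∧ chomp a p = some [] := by
  intro b
  induction b with
  | nil =>
    intro a r h
    cases a with
    | nil => injection h with h; exact ⟨[], by simp [← h], by simp [chomp]⟩
    | cons x xs => simp [chomp] at h
  | cons z bs ih =>
    intro a r h
    cases a with
    | nil =>
      injection h with h
      exact ⟨[], by simp [← h], by simp [chomp]⟩
    | cons x xs =>
      by_cases hxz : x ≤ z
      · simp only [chomp, if_pos hxz] at h
        obtain ⟨p, hp, hcp⟩ := ih xs r h
        exact ⟨z :: p, by simp [hp], by simp [chomp, hxz, hcp]⟩
      · simp only [chomp, if_neg hxz] at h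
        obtain ⟨p, hp, hcp⟩ := ih (x :: xs) r h
        exact ⟨z :: p, by simp [hp], by simp [chomp, hxz, hcp]⟩

lemma chomp_append_arg : ∀ b a₁ a₂ : List ℕ,
    chomp (a₁ ++ a₂) b = (chomp a₁ b).bind (chomp a₂) := by
  intro b
  induction b with
  | nil =>
    intro a₁ a₂
    cases a₁ with
    | nil => simp [chomp]
    | cons x xs => simp [chomp]
  | cons z bs ih =>
    intro a₁ a₂
    cases a₁ with
    | nil => simp [chomp]
    | cons x xs =>
      by_cases hxz : x ≤ z
      · simpa [chomp, hxz] using ih xs a₂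
      · simpa [chomp, hxz] using ih (x :: xs) a₂

lemma chomp_singleton (c : ℕ) : ∀ r : List ℕ, (chomp [c] r).isSome ↔ ∃ x ∈ r, c ≤ x := by
  intro r
  induction r with
  | nil => simp [chomp]
  | cons y ys ih =>
    by_cases hcy : c ≤ y
    · simp [chomp, hcy]
    · simp [chomp, hcy, ih]

lemma chomp_pair (s : List ℕ) (hpos : ∀ x ∈ s, 0 < x) :
    (chomp [1, 1] s).isSome ↔ 2 ≤ s.length := by
  match s with
  | [] => simp [chomp]
  | [u] =>
    have hu : 1 ≤ u := hpos u (by simp)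
    simp [chomp, hu]
  | u :: v :: t =>
    have hu : 1 ≤ u := hpos u (by simp)
    have hv : 1 ≤ v := hpos v (by simp)
    simp [chomp, hu, hv]

/-- suffix surgery maps -/
def g2 (r : List ℕ) : List ℕ := if r.length = 1 then List.replicate r.sum 1 else r

def g1 (s : List ℕ) : List ℕ := if s.all (· == 1) then [s.sum] else s

def transfer (g : List ℕ → List ℕ) (l b : List ℕ) : List ℕ :=
  match chomp l b with
  | none => b
  | some r => b.take (b.length - r.length) ++ g r

lemma take_append_cancel (p r : List ℕ) :
    (p ++ r).take ((p ++ r).length - r.length) = p := by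
  rw [List.length_append, Nat.add_sub_cancel]
  exact List.take_left

lemma transfer_eq (g : List ℕ → List ℕ) (l p r : List ℕ) (h : chomp l (p ++ r) = some r) :
    transfer g l (p ++ r) = p ++ g r := by
  simp [transfer, h, take_append_cancel]

lemma all_ones (s : List ℕ) (h : s.all (· == 1)) : s = List.replicate s.length 1 := by
  induction s with
  | nil => simp
  | cons x xs ih =>
    simp at h
    obtain ⟨rfl, h2⟩ := h
    simp only [List.length_cons, List.replicate_succ]
    rw [← ih (by simpa using h2)]

lemma sum_all_ones (s : List ℕ) (h : s.all (· == 1)) : s.sum = s.length := by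
  conv_lhs => rw [all_ones s h]
  simp

lemma g2_sum (r : List ℕ) : (g2 r).sum = r.sum := by
  unfold g2; split <;> simp

lemma g2_pos (r : List ℕ) (h : ∀ x ∈ r, 0 < x) : ∀ x ∈ g2 r, 0 < x := by
  unfold g2; split
  next =>
    intro x hx
    rcases List.eq_of_mem_replicate hx with rfl; norm_num
  next => exact h

lemma g2_len (r : List ℕ) (h : ∃ x ∈ r, 2 ≤ x) : 2 ≤ (g2 r).length := by
  obtain ⟨x, hx, h2x⟩ := h
  unfold g2; split
  next hlen =>
    match r, hlen with
    | [y], _ =>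
      simp at hx
      subst hx
      simpa using h2x
  next hlen =>
    rcases r with _ | ⟨y, _ | ⟨z, t⟩⟩ <;> simp_all

lemma g1_g2 (r : List ℕ) (h : ∃ x ∈ r, 2 ≤ x) : g1 (g2 r) = r := by
  obtain ⟨x, hx, h2x⟩ := h
  unfold g2; split
  next hlen =>
    match r, hlen with
    | [y], _ =>
      simp at hx
      subst hx
      unfold g1
      rw [if_pos (by simp [List.all_eq_true])]
      simp
  next hlen =>
    unfold g1
    rw [if_neg]
    simp only [List.all_eq_true, beq_iff_eq]
    push_neg
    exact ⟨x, hx, by omega⟩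

lemma g1_sum (s : List ℕ) : (g1 s).sum = s.sum := by
  unfold g1; split <;> simp

lemma g1_pos (s : List ℕ) (hpos : ∀ x ∈ s, 0 < x) (hlen : 2 ≤ s.length) :
    ∀ x ∈ g1 s, 0 < x := by
  unfold g1; split
  next h =>
    intro x hx
    simp at hx
    subst hx
    rw [sum_all_ones s h]
    omega
  next => exact hpos

lemma g1_two (s : List ℕ) (hpos : ∀ x ∈ s, 0 < x) (hlen : 2 ≤ s.length) :
    ∃ x ∈ g1 s, 2 ≤ x := by
  unfold g1; split
  next h => exact ⟨s.sum, by simp, by rw [sum_all_ones s h]; omega⟩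
  next h =>
    simp only [List.all_eq_true, beq_iff_eq] at h
    push_neg at h
    obtain ⟨x, hx, hx1⟩ := h
    exact ⟨x, hx, by have := hpos x hx; omega⟩

lemma g2_g1 (s : List ℕ) (hpos : ∀ x ∈ s, 0 < x) (hlen : 2 ≤ s.length) :
    g2 (g1 s) = s := by
  unfold g1; split
  next h =>
    unfold g2
    rw [if_pos (by simp)]
    rw [sum_all_ones s h]
    simp
    exact (all_ones s h).symm
  next h =>
    unfold g2
    rw [if_neg (by omega)]

end DomAux

open DomAux in
theorem domEquiv_two_one_one (l : List ℕ) (hl : ∀ x ∈ l, 0 < x) :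
    ∀ n : ℕ, 0 < n →
      (domSet n (l ++ [2])).ncard = (domSet n (l ++ [1, 1])).ncard := by
  intro n _
  -- membership characterizations
  have mem2 : ∀ b : List ℕ, b ∈ domSet n (l ++ [2]) ↔
      IsComposition n b ∧ ∃ r, chomp l b = some r ∧ ∃ x ∈ r, 2 ≤ x := by
    intro b
    simp only [domSet, Set.mem_setOf_eq, and_congr_right_iff]
    intro _
    rw [dominates_iff_chomp, chomp_append_arg]
    cases hcb : chomp l b with
    | none => simp
    | some r => simp [chomp_singleton 2 r]
  have mem11 : ∀ b : List ℕ, b ∈ domSet n (l ++ [1, 1]) ↔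
      IsComposition n b ∧ ∃ r, chomp l b = some r ∧ (chomp [1, 1] r).isSome := by
    intro b
    simp only [domSet, Set.mem_setOf_eq, and_congr_right_iff]
    intro _
    rw [dominates_iff_chomp, chomp_append_arg]
    cases hcb : chomp l b with
    | none => simp
    | some r => simp
  set F : List ℕ → List ℕ := transfer g2 l with hF
  set G : List ℕ → List ℕ := transfer g1 l with hG
  have hmapF : Set.MapsTo F (domSet n (l ++ [2])) (domSet n (l ++ [1, 1])) := by
    intro b hb
    rw [mem2] at hb
    obtain ⟨⟨hbpos, hbsum⟩, r, hcr, hx⟩ := hb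
    obtain ⟨p, rfl, hcp⟩ := chomp_decomp _ _ _ hcr
    have hFb : F (p ++ r) = p ++ g2 r := transfer_eq _ _ _ _ hcr
    have hrpos : ∀ x ∈ r, 0 < x := fun x hx => hbpos x (by simp [hx])
    have hppos : ∀ x ∈ p, 0 < x := fun x hx => hbpos x (by simp [hx])
    have hg2pos := g2_pos r hrpos
    rw [mem11, hFb]
    refine ⟨⟨?_, ?_⟩, g2 r, ?_, ?_⟩
    · intro x hx
      rcases List.mem_append.mp hx with h | h
      · exact hppos x h
      · exact hg2pos x h
    · rw [List.sum_append, g2_sum]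
      simpa [List.sum_append] using hbsum
    · simpa using chomp_append_right p l [] (g2 r) hcp
    · rw [chomp_pair _ hg2pos]
      exact g2_len r hx
  have hmapG : Set.MapsTo G (domSet n (l ++ [1, 1])) (domSet n (l ++ [2])) := by
    intro b hb
    rw [mem11] at hb
    obtain ⟨⟨hbpos, hbsum⟩, r, hcr, hx⟩ := hb
    obtain ⟨p, rfl, hcp⟩ := chomp_decomp _ _ _ hcr
    have hGb : G (p ++ r) = p ++ g1 r := transfer_eq _ _ _ _ hcr
    have hrpos : ∀ x ∈ r, 0 < x := fun x hx => hbpos x (by simp [hx])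
    have hppos : ∀ x ∈ p, 0 < x := fun x hx => hbpos x (by simp [hx])
    rw [chomp_pair _ hrpos] at hx
    have hg1pos := g1_pos r hrpos hx
    rw [mem2, hGb]
    refine ⟨⟨?_, ?_⟩, g1 r, ?_, ?_⟩
    · intro x hxm
      rcases List.mem_append.mp hxm with h | h
      · exact hppos x h
      · exact hg1pos x h
    · rw [List.sum_append, g1_sum]
      simpa [List.sum_append] using hbsum
    · simpa using chomp_append_right p l [] (g1 r) hcp
    · exact g1_two r hrpos hx
  have hinv : Set.InvOn G F (domSet n (l ++ [2])) (domSet n (l ++ [1, 1])) := by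
    constructor
    · intro b hb
      rw [mem2] at hb
      obtain ⟨⟨hbpos, hbsum⟩, r, hcr, hx⟩ := hb
      obtain ⟨p, rfl, hcp⟩ := chomp_decomp _ _ _ hcr
      have hFb : F (p ++ r) = p ++ g2 r := transfer_eq _ _ _ _ hcr
      have hc2 : chomp l (p ++ g2 r) = some (g2 r) := by
        simpa using chomp_append_right p l [] (g2 r) hcp
      have hGFb : G (p ++ g2 r) = p ++ g1 (g2 r) := transfer_eq _ _ _ _ hc2
      rw [hFb, hGFb, g1_g2 r hx]
    · intro b hb
      rw [mem11] at hb
      obtain ⟨⟨hbpos, hbsum⟩, r, hcr, hx⟩ := hb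
      obtain ⟨p, rfl, hcp⟩ := chomp_decomp _ _ _ hcr
      have hrpos : ∀ x ∈ r, 0 < x := fun x hx => hbpos x (by simp [hx])
      rw [chomp_pair _ hrpos] at hx
      have hGb : G (p ++ r) = p ++ g1 r := transfer_eq _ _ _ _ hcr
      have hc1 : chomp l (p ++ g1 r) = some (g1 r) := by
        simpa using chomp_append_right p l [] (g1 r) hcp
      have hFGb : F (p ++ g1 r) = p ++ g2 (g1 r) := transfer_eq _ _ _ _ hc1
      rw [hGb, hFGb, g2_g1 r hrpos hx]
  have hbij : Set.BijOn F (domSet n (l ++ [2])) (domSet n (l ++ [1, 1])) :=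
    hinv.bijOn hmapF hmapG
  calc (domSet n (l ++ [2])).ncard
      = (F '' (domSet n (l ++ [2]))).ncard := (Set.ncard_image_of_injOn hbij.injOn).symm
    _ = (domSet n (l ++ [1, 1])).ncard := by rw [hbij.image_eq]
end

section
/- For any composition a and any positive integer n, the set D_n(a) decomposes as the disjoint union of D_n^h(a) and, over i from 1 to n-1, the sets {(c,c') : c ∈ D_i^h(a), c' a composition of n-i}, where (c,c') denotes concatenation. Consequently |D_n(a)| = |D_n^h(a)| + Σ_{i=1}^{n-1} |D_i^h(a)| · 2^{n-i-1}. -/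
/-- `b` h-dominates `a`: `b` dominates `a` and either `b` has one term or
its proper prefix (dropping the last term) does not dominate `a`. -/
def HDominates (b a : List ℕ) : Prop :=
  Dominates b a ∧ (b.length = 1 ∨ ¬ Dominates b.dropLast a)

/-- `D_n^h(a)`: the set of compositions of `n` h-dominating `a`. -/
def hdomSet (n : ℕ) (a : List ℕ) : Set (List ℕ) :=
  {b | IsComposition n b ∧ HDominates b a}

/-- Compositions obtained by appending a composition of `n - i` to an element of `D_i^h(a)`. -/
def concatSet (a : List ℕ) (i n : ℕ) : Set (List ℕ) :=
  {b | ∃ c c' : List ℕ, b = c ++ c' ∧ c ∈ hdomSet i a ∧ IsComposition (n - i) c'}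

lemma dom_sublist {b d a : List ℕ} (h : Dominates b a) (hbd : b.Sublist d) : Dominates d a :=
  let ⟨b', hb', hf⟩ := h; ⟨b', hb'.trans hbd, hf⟩

lemma dom_ne_nil {b a : List ℕ} (ha : a ≠ []) (h : Dominates b a) : b ≠ [] := by
  obtain ⟨b', hb', hf⟩ := h
  rintro rfl
  rw [List.sublist_nil] at hb'
  subst hb'
  rw [List.forall₂_nil_right_iff] at hf
  exact ha hf

/-- A prefix of `c₂` of length `< c₂.length` that dominates `a` contradicts h-domination. -/
lemma hdom_unique_le {a c₁ c₂ u v : List ℕ} (ha : a ≠ [])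
    (h : c₁ ++ u = c₂ ++ v) (h1 : HDominates c₁ a) (h2 : HDominates c₂ a)
    (hle : c₁.length ≤ c₂.length) : c₁ = c₂ := by
  have hc1 : c₁ = (c₂ ++ v).take c₁.length := by
    rw [← h, List.take_left]
  rcases eq_or_lt_of_le hle with heq | hlt
  · rw [hc1, heq, List.take_left]
  · exfalso
    have hpre : c₁ <+: c₂.dropLast := by
      rw [List.dropLast_eq_take, hc1, List.take_append,
        Nat.sub_eq_zero_of_le hle, List.take_zero, List.append_nil]
      exact List.take_prefix_take_left (by omega)
    have hdom : Dominates c₂.dropLast a := dom_sublist h1.1 hpre.sublist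
    rcases h2.2 with hl | hnd
    · have : c₁ ≠ [] := dom_ne_nil ha h1.1
      have : 0 < c₁.length := List.length_pos_iff.mpr this
      omega
    · exact hnd hdom

lemma hdom_unique {a c₁ c₂ u v : List ℕ} (ha : a ≠ [])
    (h : c₁ ++ u = c₂ ++ v) (h1 : HDominates c₁ a) (h2 : HDominates c₂ a) : c₁ = c₂ := by
  rcases le_total c₁.length c₂.length with hle | hle
  · exact hdom_unique_le ha h h1 h2 hle
  · exact (hdom_unique_le ha h.symm h2 h1 hle).symm

/-- Minimal dominating prefix: if `b` dominates `a` then some prefix of `b` h-dominates `a`,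
and if moreover `b.dropLast` dominates `a`, the prefix is proper. -/
lemma exists_hdom_prefix {a b : List ℕ} (ha : a ≠ []) (hd : Dominates b a) :
    ∃ k ≤ b.length, HDominates (b.take k) a ∧
      (Dominates b.dropLast a → k ≤ b.length - 1) := by
  have hex : ∃ k, Dominates (b.take k) a := ⟨b.length, by simpa using hd⟩
  classical
  set k := Nat.find hex with hk
  have hkd : Dominates (b.take k) a := Nat.find_spec hex
  have hkle : k ≤ b.length := Nat.find_le (by simpa using hd)
  have hk1 : 1 ≤ k := by
    by_contra hlt
    push_neg at hlt
    interval_cases k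
    exact dom_ne_nil ha hkd (by simp)
  refine ⟨k, hkle, ⟨hkd, Or.inr ?_⟩, fun hdl => ?_⟩
  · have : (b.take k).dropLast = b.take (k - 1) := by
      rw [List.dropLast_eq_take, List.length_take, List.take_take]
      congr 1
      omega
    rw [this]
    exact Nat.find_min hex (by omega)
  · have : Dominates (b.take (b.length - 1)) a := by
      rwa [← List.dropLast_eq_take]
    exact Nat.find_le this

/-- The set of compositions of `m`. -/
def compSet (m : ℕ) : Set (List ℕ) := {l | IsComposition m l}

def compEquiv (m : ℕ) : compSet m ≃ Composition m where
  toFun l := ⟨l.1, fun hi => l.2.1 _ hi, l.2.2⟩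
  invFun c := ⟨c.blocks, fun x hx => c.blocks_pos hx, c.blocks_sum⟩
  left_inv l := rfl
  right_inv c := rfl

lemma compSet_finite (m : ℕ) : (compSet m).Finite := by
  rw [← Set.finite_coe_iff]
  exact Finite.of_equiv _ (compEquiv m).symm

lemma compSet_ncard (m : ℕ) : (compSet m).ncard = 2 ^ (m - 1) := by
  rw [← Nat.card_coe_set_eq, Nat.card_congr (compEquiv m), Nat.card_eq_fintype_card,
    composition_card]

lemma hdomSet_subset (m : ℕ) (a : List ℕ) : hdomSet m a ⊆ compSet m := fun _ hb => hb.1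

lemma hdomSet_finite (m : ℕ) (a : List ℕ) : (hdomSet m a).Finite :=
  (compSet_finite m).subset (hdomSet_subset m a)

lemma domSet_finite (m : ℕ) (a : List ℕ) : (domSet m a).Finite :=
  (compSet_finite m).subset (fun _ hb => hb.1)

lemma concatSet_eq_image (a : List ℕ) (i n : ℕ) :
    concatSet a i n = (fun p : List ℕ × List ℕ => p.1 ++ p.2) '' (hdomSet i a ×ˢ compSet (n - i)) := by
  ext b
  constructor
  · rintro ⟨c, c', rfl, hc, hc'⟩
    exact ⟨(c, c'), ⟨hc, hc'⟩, rfl⟩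
  · rintro ⟨⟨c, c'⟩, ⟨hc, hc'⟩, rfl⟩
    exact ⟨c, c', rfl, hc, hc'⟩

lemma concat_injOn (a : List ℕ) (ha : a ≠ []) (i n : ℕ) :
    Set.InjOn (fun p : List ℕ × List ℕ => p.1 ++ p.2) (hdomSet i a ×ˢ compSet (n - i)) := by
  rintro ⟨c₁, c₁'⟩ ⟨hc₁, _⟩ ⟨c₂, c₂'⟩ ⟨hc₂, _⟩ h
  simp only at h
  have hcc : c₁ = c₂ := hdom_unique ha h hc₁.2 hc₂.2
  subst hcc
  simp only [List.append_cancel_left_eq] at h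
  simp [h]

lemma concatSet_finite (a : List ℕ) (i n : ℕ) : (concatSet a i n).Finite := by
  rw [concatSet_eq_image]
  exact (((hdomSet_finite i a).prod (compSet_finite (n - i)))).image _

lemma concatSet_ncard (a : List ℕ) (ha : a ≠ []) (i n : ℕ) :
    (concatSet a i n).ncard = (hdomSet i a).ncard * 2 ^ (n - i - 1) := by
  rw [concatSet_eq_image, Set.ncard_image_of_injOn (concat_injOn a ha i n)]
  rw [← compSet_ncard (n - i), ← Nat.card_coe_set_eq, ← Nat.card_coe_set_eq,
    ← Nat.card_coe_set_eq, Nat.card_congr (Equiv.Set.prod _ _), Nat.card_prod]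

lemma ncard_biUnion {ι : Type*} (s : Finset ι) (f : ι → Set (List ℕ))
    (hf : ∀ i ∈ s, (f i).Finite)
    (hd : ∀ i ∈ s, ∀ j ∈ s, i ≠ j → Disjoint (f i) (f j)) :
    (⋃ i ∈ s, f i).ncard = ∑ i ∈ s, (f i).ncard := by
  classical
  induction s using Finset.induction_on with
  | empty => simp
  | @insert x s hx ih =>
    rw [Finset.set_biUnion_insert, Finset.sum_insert hx,
      Set.ncard_union_eq ?_ (hf x (Finset.mem_insert_self x s)) ?_,
      ih (fun i hi => hf i (Finset.mem_insert_of_mem hi))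
        (fun i hi j hj hij => hd i (Finset.mem_insert_of_mem hi) j (Finset.mem_insert_of_mem hj) hij)]
    · rw [Set.disjoint_iUnion_right]
      intro i
      rw [Set.disjoint_iUnion_right]
      intro hi
      exact hd x (Finset.mem_insert_self x s) i (Finset.mem_insert_of_mem hi)
        (fun h => hx (h ▸ hi))
    · exact Set.Finite.biUnion (Set.finite_mem_finset s)
        (fun i hi => hf i (Finset.mem_insert_of_mem hi))

theorem domSet_decomposition (a : List ℕ) (ha : ∀ x ∈ a, 0 < x) (hane : a ≠ [])
    (n : ℕ) (hn : 0 < n) :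
    (domSet n a = hdomSet n a ∪ ⋃ i ∈ Finset.Icc 1 (n - 1), concatSet a i n) ∧
    (∀ i ∈ Finset.Icc 1 (n - 1), Disjoint (hdomSet n a) (concatSet a i n)) ∧
    (∀ i ∈ Finset.Icc 1 (n - 1), ∀ j ∈ Finset.Icc 1 (n - 1), i ≠ j →
      Disjoint (concatSet a i n) (concatSet a j n)) ∧
    (domSet n a).ncard =
      (hdomSet n a).ncard +
        ∑ i ∈ Finset.Icc 1 (n - 1), (hdomSet i a).ncard * 2 ^ (n - i - 1) := by
  -- coverage
  have hcov : domSet n a = hdomSet n a ∪ ⋃ i ∈ Finset.Icc 1 (n - 1), concatSet a i n := by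
    ext b
    constructor
    · rintro ⟨hbc, hbd⟩
      by_cases hh : HDominates b a
      · exact Or.inl ⟨hbc, hh⟩
      · right
        have hnh : b.length ≠ 1 ∧ Dominates b.dropLast a := by
          rw [HDominates] at hh
          push_neg at hh
          exact hh hbd
        obtain ⟨k, hkle, hkh, hkpr⟩ := exists_hdom_prefix hane hbd
        have hklt : k ≤ b.length - 1 := hkpr hnh.2
        set c := b.take k with hc
        set c' := b.drop k with hc'
        have hbcc : b = c ++ c' := (List.take_append_drop k b).symm
        have hbne : b ≠ [] := by
          rintro rfl
          simp [IsComposition] at hbc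
          omega
        have hc'ne : c' ≠ [] := by
          rw [hc', ← List.length_pos_iff, List.length_drop]
          have : 0 < b.length := List.length_pos_iff.mpr hbne
          omega
        have hcposs : ∀ x ∈ c, 0 < x := fun x hx => hbc.1 x (List.take_subset k b hx)
        have hc'poss : ∀ x ∈ c', 0 < x := fun x hx => hbc.1 x (List.drop_subset k b hx)
        have hsum : c.sum + c'.sum = n := by
          rw [← List.sum_append, ← hbcc, hbc.2]
        have hcne : c ≠ [] := dom_ne_nil hane hkh.1
        have hcpos : 0 < c.sum := by
          rcases c with _ | ⟨x, c⟩
          · exact absurd rfl hcne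
          · have := hcposs x (by simp)
            simp only [List.sum_cons]
            omega
        have hc'pos : 0 < c'.sum := by
          rcases c' with _ | ⟨x, c'⟩
          · exact absurd rfl hc'ne
          · have := hc'poss x (by simp)
            simp only [List.sum_cons]
            omega
        have hmem : c.sum ∈ Finset.Icc 1 (n - 1) := by
          rw [Finset.mem_Icc]
          omega
        exact Set.mem_biUnion hmem ⟨c, c', hbcc, ⟨⟨hcposs, rfl⟩, hkh⟩, hc'poss, by omega⟩
    · rintro (hb | hb)
      · exact ⟨hb.1, hb.2.1⟩
      · obtain ⟨i, hi, c, c', rfl, ⟨⟨hcp, hcs⟩, hch⟩, hc'p, hc's⟩ := by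
          simpa using hb
        refine ⟨⟨?_, ?_⟩, dom_sublist hch.1 (List.sublist_append_left c c')⟩
        · intro x hx
          rcases List.mem_append.mp hx with h | h
          · exact hcp x h
          · exact hc'p x h
        · rw [List.sum_append, hcs, hc's]
          omega
  -- disjointness hdom/concat
  have hdisj1 : ∀ i ∈ Finset.Icc 1 (n - 1), Disjoint (hdomSet n a) (concatSet a i n) := by
    intro i hi
    rw [Finset.mem_Icc] at hi
    rw [Set.disjoint_left]
    rintro b ⟨_, hbh⟩ ⟨c, c', rfl, ⟨⟨hcp, hcs⟩, hch⟩, hc'p, hc's⟩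
    have hc'ne : c' ≠ [] := by
      rintro rfl
      simp at hc's
      omega
    have hcne : c ≠ [] := dom_ne_nil hane hch.1
    have hdl : (c ++ c').dropLast = c ++ c'.dropLast := List.dropLast_append_of_ne_nil (l' := c) hc'ne
    have hdom : Dominates (c ++ c').dropLast a := by
      rw [hdl]
      exact dom_sublist hch.1 (List.sublist_append_left c c'.dropLast)
    rcases hbh.2 with hl | hnd
    · rw [List.length_append] at hl
      have h1 : 0 < c.length := List.length_pos_iff.mpr hcne
      have h2 : 0 < c'.length := List.length_pos_iff.mpr hc'ne
      omega
    · exact hnd hdom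
  -- pairwise disjointness
  have hdisj2 : ∀ i ∈ Finset.Icc 1 (n - 1), ∀ j ∈ Finset.Icc 1 (n - 1), i ≠ j →
      Disjoint (concatSet a i n) (concatSet a j n) := by
    intro i _ j _ hij
    rw [Set.disjoint_left]
    rintro b ⟨c₁, c₁', h1, ⟨⟨_, hs1⟩, hh1⟩, _⟩ ⟨c₂, c₂', h2, ⟨⟨_, hs2⟩, hh2⟩, _⟩
    have : c₁ = c₂ := hdom_unique hane (h1 ▸ h2) hh1 hh2
    exact hij (by rw [← hs1, ← hs2, this])
  refine ⟨hcov, hdisj1, hdisj2, ?_⟩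
  -- cardinality
  have hUfin : (⋃ i ∈ Finset.Icc 1 (n - 1), concatSet a i n).Finite :=
    Set.Finite.biUnion (Set.finite_mem_finset (Finset.Icc 1 (n - 1))) (fun i _ => concatSet_finite a i n)
  rw [hcov, Set.ncard_union_eq ?_ (hdomSet_finite n a) hUfin,
      ncard_biUnion _ _ (fun i _ => concatSet_finite a i n)
        (fun i hi j hj hij => hdisj2 i hi j hj hij)]
  · congr 1
    exact Finset.sum_congr rfl (fun i _ => concatSet_ncard a hane i n)
  · rw [Set.disjoint_iUnion_right]
    intro i
    rw [Set.disjoint_iUnion_right]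
    intro hi
    exact hdisj1 i hi
end

section
/- Two compositions a and a' are dominating equivalent if and only if they are h-dominating equivalent; i.e., |D_n(a)| = |D_n(a')| for all n ≥ 1 if and only if |D_n^h(a)| = |D_n^h(a')| for all n ≥ 1. -/
/-! ### Auxiliary development -/

noncomputable def compFinset (n : ℕ) : Finset (List ℕ) :=
  (Finset.univ : Finset (Composition n)).image Composition.blocks

lemma mem_compFinset {n : ℕ} {l : List ℕ} : l ∈ compFinset n ↔ IsComposition n l := by
  simp only [compFinset, Finset.mem_image, Finset.mem_univ, true_and]
  constructor
  · rintro ⟨c, rfl⟩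
    exact ⟨fun x hx => c.blocks_pos hx, c.blocks_sum⟩
  · rintro ⟨h1, h2⟩
    exact ⟨⟨l, fun {i} hi => h1 i hi, h2⟩, rfl⟩

noncomputable def domFinset (n : ℕ) (a : List ℕ) : Finset (List ℕ) :=
  @Finset.filter _ (fun b => Dominates b a) (Classical.decPred _) (compFinset n)

noncomputable def hdomFinset (n : ℕ) (a : List ℕ) : Finset (List ℕ) :=
  @Finset.filter _ (fun b => HDominates b a) (Classical.decPred _) (compFinset n)

lemma mem_domFinset {n : ℕ} {a b : List ℕ} :
    b ∈ domFinset n a ↔ IsComposition n b ∧ Dominates b a := by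
  simp [domFinset, Finset.mem_filter, mem_compFinset]

lemma mem_hdomFinset {n : ℕ} {a b : List ℕ} :
    b ∈ hdomFinset n a ↔ IsComposition n b ∧ HDominates b a := by
  simp [hdomFinset, Finset.mem_filter, mem_compFinset]

lemma domSet_ncard (n : ℕ) (a : List ℕ) : (domSet n a).ncard = (domFinset n a).card := by
  rw [show domSet n a = ↑(domFinset n a) by ext b; simp [domSet, mem_domFinset]]
  exact Set.ncard_coe_finset _

lemma hdomSet_ncard (n : ℕ) (a : List ℕ) : (hdomSet n a).ncard = (hdomFinset n a).card := by
  rw [show hdomSet n a = ↑(hdomFinset n a) by ext b; simp [hdomSet, mem_hdomFinset]]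
  exact Set.ncard_coe_finset _

lemma not_dominates_nil {a : List ℕ} (hane : a ≠ []) : ¬ Dominates [] a := by
  rintro ⟨b', hb', hf⟩
  rw [List.sublist_nil] at hb'
  subst hb'
  exact hane (List.forall₂_nil_right_iff.mp hf)

lemma Dominates.of_sublist {a b c : List ℕ} (h : Dominates b a) (hbc : b.Sublist c) :
    Dominates c a := by
  obtain ⟨b', h1, h2⟩ := h
  exact ⟨b', h1.trans hbc, h2⟩

lemma HDominates.ne_nil {a b : List ℕ} (hane : a ≠ []) (h : HDominates b a) : b ≠ [] := by
  rintro rfl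
  exact not_dominates_nil hane h.1

/-- Uniqueness of the h-dominating prefix. -/
lemma hdom_prefix_unique {a p s p' s' : List ℕ} (hane : a ≠ [])
    (h : p ++ s = p' ++ s') (hp : HDominates p a) (hp' : HDominates p' a) : p = p' := by
  have key : ∀ {p s p' s' : List ℕ}, p ++ s = p' ++ s' → HDominates p a → HDominates p' a →
      p <+: p' → p = p' := by
    rintro p s p' s' h hp hp' ⟨t, rfl⟩
    rcases eq_or_ne t [] with rfl | ht
    · simp
    · exfalso
      have hdl : (p ++ t).dropLast = p ++ t.dropLast := List.dropLast_append_of_ne_nil ht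
      have hdom : Dominates (p ++ t).dropLast a := by
        rw [hdl]
        exact hp.1.of_sublist (List.sublist_append_left _ _)
      rcases hp'.2 with h1 | h2
      · -- length (p ++ t) = 1 with p ≠ [] and t ≠ [] is impossible
        have := hp.ne_nil hane
        rcases p with _ | ⟨x, p⟩
        · exact this rfl
        · simp [List.length_append] at h1
          obtain ⟨hp0, ht0⟩ := h1
          exact ht ht0
      · exact h2 hdom
  have hpre : p <+: (p' ++ s') := h ▸ List.prefix_append p s
  have hpre' : p' <+: (p' ++ s') := List.prefix_append p' s'
  rcases List.prefix_or_prefix_of_prefix hpre hpre' with hh | hh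
  · exact key h hp hp' hh
  · exact (key h.symm hp' hp hh).symm

lemma compFinset_zero : compFinset 0 = {([] : List ℕ)} := by
  ext l
  simp only [mem_compFinset, Finset.mem_singleton, IsComposition]
  constructor
  · rintro ⟨h1, h2⟩
    cases l with
    | nil => rfl
    | cons x l =>
      exfalso
      have := h1 x List.mem_cons_self
      simp [List.sum_cons] at h2
      omega
  · rintro rfl; exact ⟨by simp, rfl⟩

lemma hdomFinset_zero {a : List ℕ} (hane : a ≠ []) : hdomFinset 0 a = ∅ := by
  ext b
  simp only [mem_hdomFinset, Finset.notMem_empty, iff_false]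
  rintro ⟨hb, hd⟩
  have : b = [] := by
    rcases b with _ | ⟨x, b⟩
    · rfl
    · exfalso
      have h1 := hb.1 x List.mem_cons_self
      have h2 := hb.2
      simp [List.sum_cons] at h2
      omega
  subst this
  exact not_dominates_nil hane hd.1

/-- The key counting identity. -/
lemma dom_card_eq (a : List ℕ) (hane : a ≠ []) (n : ℕ) :
    (domFinset n a).card =
      ∑ m ∈ Finset.range (n + 1), (hdomFinset m a).card * (compFinset (n - m)).card := by
  classical
  have hset : domFinset n a = (Finset.range (n + 1)).biUnion
      (fun m => ((hdomFinset m a) ×ˢ (compFinset (n - m))).image (fun p => p.1 ++ p.2)) := by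
    ext b
    simp only [Finset.mem_biUnion, Finset.mem_range, Finset.mem_image, Finset.mem_product,
      Prod.exists, mem_domFinset]
    constructor
    · rintro ⟨⟨hpos, hsum⟩, hdom⟩
      -- find minimal k with take k b dominating a
      have hex : ∃ k, Dominates (b.take k) a := ⟨b.length, by simpa using hdom⟩
      set k := Nat.find hex with hk
      have hkdom : Dominates (b.take k) a := Nat.find_spec hex
      have hkmin : ∀ j < k, ¬ Dominates (b.take j) a := fun j hj => Nat.find_min hex hj
      have hkle : k ≤ b.length := Nat.find_min' hex (by simpa using hdom)
      have hkpos : 0 < k := by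
        rcases Nat.eq_zero_or_pos k with h0 | h0
        · exfalso; rw [h0] at hkdom; simp at hkdom; exact not_dominates_nil hane hkdom
        · exact h0
      set p := b.take k with hp
      set s := b.drop k with hs
      have hps : p ++ s = b := List.take_append_drop k b
      have hplen : p.length = k := by simp [hp, List.length_take]; omega
      have hdlp : p.dropLast = b.take (k - 1) := by
        -- both are prefixes of b of length k - 1
        have h1 : p.dropLast <+: b := (List.dropLast_prefix p).trans (List.take_prefix k b)
        have h2 : (b.take (k-1)) <+: b := List.take_prefix _ b
        have hl1 : p.dropLast.length = k - 1 := by simp [List.length_dropLast, hplen]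
        have := List.prefix_iff_eq_take.mp h1
        rw [hl1] at this
        exact this
      have hsum2 : p.sum + s.sum = n := by rw [← List.sum_append, hps, hsum]
      refine ⟨p.sum, by omega, p, s, ⟨mem_hdomFinset.mpr ⟨⟨fun x hx => hpos x (List.mem_of_mem_take hx), rfl⟩,
        hkdom, Or.inr ?_⟩, mem_compFinset.mpr ⟨fun x hx => hpos x (List.mem_of_mem_drop hx), by omega⟩⟩,
        hps⟩
      rw [hdlp]; exact hkmin (k - 1) (by omega)
    · rintro ⟨m, hm, p, s, ⟨hpmem, hsmem⟩, rfl⟩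
      rw [mem_hdomFinset] at hpmem
      rw [mem_compFinset] at hsmem
      refine ⟨⟨?_, ?_⟩, hpmem.2.1.of_sublist (List.sublist_append_left _ _)⟩
      · intro x hx
        rcases List.mem_append.mp hx with h | h
        · exact hpmem.1.1 x h
        · exact hsmem.1 x h
      · rw [List.sum_append, hpmem.1.2, hsmem.2]; omega
  rw [hset, Finset.card_biUnion]
  · congr 1
    ext m
    rw [Finset.card_image_of_injOn, Finset.card_product]
    rintro ⟨p, s⟩ hps ⟨p', s'⟩ hps' heq
    simp only [Finset.mem_coe, Finset.mem_product, mem_hdomFinset] at hps hps'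
    have hpp : p = p' := hdom_prefix_unique hane heq hps.1.2 hps'.1.2
    subst hpp
    have : s = s' := by
      have := heq
      simpa using this
    simp [this]
  · intro m hm m' hm' hmm
    rw [Function.onFun, Finset.disjoint_left]
    rintro b hb hb'
    simp only [Finset.mem_image, Finset.mem_product, Prod.exists] at hb hb'
    obtain ⟨p, s, ⟨hp, hs⟩, rfl⟩ := hb
    obtain ⟨p', s', ⟨hp', hs'⟩, heq⟩ := hb'
    rw [mem_hdomFinset] at hp hp'
    have : p = p' := hdom_prefix_unique hane heq.symm hp.2 hp'.2
    apply hmm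
    rw [← hp.1.2, ← hp'.1.2, this]

lemma hdom_card_eq_of_dom (a a' : List ℕ) (hane : a ≠ []) (ha'ne : a' ≠ [])
    (h : ∀ n : ℕ, 0 < n → (domFinset n a).card = (domFinset n a').card) :
    ∀ n : ℕ, 0 < n → (hdomFinset n a).card = (hdomFinset n a').card := by
  intro n
  induction n using Nat.strong_induction_on with
  | _ n ih =>
    intro hn
    have key := dom_card_eq a hane n
    have key' := dom_card_eq a' ha'ne n
    rw [Finset.sum_range_succ] at key key'
    have hsum : ∑ m ∈ Finset.range n, (hdomFinset m a).card * (compFinset (n - m)).card =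
        ∑ m ∈ Finset.range n, (hdomFinset m a').card * (compFinset (n - m)).card := by
      apply Finset.sum_congr rfl
      intro m hm
      rcases Nat.eq_zero_or_pos m with rfl | hmpos
      · rw [hdomFinset_zero hane, hdomFinset_zero ha'ne]
      · rw [ih m (Finset.mem_range.mp hm) hmpos]
    have hC0 : (compFinset (n - n)).card = 1 := by
      rw [Nat.sub_self, compFinset_zero]; rfl
    rw [hC0, mul_one] at key key'
    have hD := h n hn
    omega

theorem domEquiv_iff_hdomEquiv (a a' : List ℕ)
    (ha : ∀ x ∈ a, 0 < x) (ha' : ∀ x ∈ a', 0 < x)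
    (hane : a ≠ []) (ha'ne : a' ≠ []) :
    (∀ n : ℕ, 0 < n → (domSet n a).ncard = (domSet n a').ncard) ↔
      (∀ n : ℕ, 0 < n → (hdomSet n a).ncard = (hdomSet n a').ncard) := by
  simp only [domSet_ncard, hdomSet_ncard]
  constructor
  · exact hdom_card_eq_of_dom a a' hane ha'ne
  · intro h n hn
    rw [dom_card_eq a hane n, dom_card_eq a' ha'ne n]
    apply Finset.sum_congr rfl
    intro m hm
    rcases Nat.eq_zero_or_pos m with rfl | hmpos
    · rw [hdomFinset_zero hane, hdomFinset_zero ha'ne]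
    · rw [h m hmpos]
end

section
/- For a composition a, a positive integer s, and any positive integer n, the set D_{n+s'}^h((a,s)) of compositions h-dominating the concatenation (a,s) decomposes as the disjoint union over i of {(c,c') : c ∈ D_i^h(a), c' ∈ C_{n-i,s}}, where C_{k,s} is the set of compositions (c_1,...,c_m) of k with c_i < s for all i < m and c_m ≥ s. -/
/-- `C_{k,s}`: compositions of `k` all of whose terms are `< s` except the last, which is `≥ s`. -/
def lastBigSet (k s : ℕ) : Set (List ℕ) :=
  {c | IsComposition k c ∧ ∃ (l : List ℕ) (m : ℕ),
    c = l ++ [m] ∧ (∀ x ∈ l, x < s) ∧ s ≤ m}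

lemma forall₂_app_singleton {R : ℕ → ℕ → Prop} :
    ∀ {a w : List ℕ} {s : ℕ}, List.Forall₂ R (a ++ [s]) w →
      ∃ w₀ m, w = w₀ ++ [m] ∧ List.Forall₂ R a w₀ ∧ R s m := by
  intro a
  induction a with
  | nil =>
    intro w s h
    simp only [List.nil_append] at h
    rcases List.forall₂_cons_left_iff.mp h with ⟨m, w', hRm, hw', rfl⟩
    rcases List.forall₂_nil_left_iff.mp hw' with rfl
    exact ⟨[], m, rfl, List.Forall₂.nil, hRm⟩
  | cons x as ih =>
    intro w s h
    rcases List.forall₂_cons_left_iff.mp h with ⟨y, w', hxy, hw', rfl⟩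
    rcases ih hw' with ⟨w₀, m, rfl, hf, hR⟩
    exact ⟨y :: w₀, m, rfl, List.Forall₂.cons hxy hf, hR⟩

lemma sublist_dropLast_of_concat_sublist {u v : List ℕ} {x : ℕ} (h : (u ++ [x]).Sublist v) :
    u.Sublist v.dropLast := by
  have hv : v ≠ [] := by
    rintro rfl
    simpa using h.length_le
  have hv2 : v = v.dropLast ++ [v.getLast hv] := (List.dropLast_append_getLast hv).symm
  rw [hv2] at h
  rcases List.sublist_append_iff.mp h with ⟨l₁, l₂, heq, h1, h2⟩
  rcases List.sublist_singleton.mp h2 with rfl | rfl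
  · rw [List.append_nil] at heq
    exact (List.sublist_append_left u [x]).trans (heq ▸ h1)
  · have hu : u = l₁ := by
      have hlen : u.length = l₁.length := by
        have := congrArg List.length heq
        simp at this; omega
      exact (List.append_inj heq (by simpa using hlen)).1
    exact hu ▸ h1

lemma witness_in_left {w : List ℕ} {m s : ℕ} {c l : List ℕ}
    (h : (w ++ [m]).Sublist (c ++ l)) (hm : s ≤ m) (hl : ∀ x ∈ l, x < s) :
    (w ++ [m]).Sublist c := by
  rcases List.sublist_append_iff.mp h with ⟨l₁, l₂, heq, h1, h2⟩
  rcases l₂.eq_nil_or_concat with rfl | ⟨l₂', y, rfl⟩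
  · rw [List.append_nil] at heq; exact heq ▸ h1
  · exfalso
    rw [List.concat_eq_append] at heq h2
    have hy : y ∈ l := h2.subset (by simp)
    have hylt : y < s := hl y hy
    have hmy : m = y := by
      have h3 := congrArg (fun t => t.getLast?) heq
      simpa [List.getLast?_append] using h3
    omega

lemma dominates_length_le {c a : List ℕ} (h : Dominates c a) : a.length ≤ c.length := by
  rcases h with ⟨w, hw, hf⟩
  calc a.length = w.length := hf.length_eq
    _ ≤ c.length := hw.length_le

lemma one_le_sum {l : List ℕ} (hpos : ∀ x ∈ l, 0 < x) (hne : l ≠ []) : 1 ≤ l.sum := by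
  cases l with
  | nil => exact absurd rfl hne
  | cons y t =>
    have := hpos y List.mem_cons_self
    simp only [List.sum_cons]
    omega

lemma fwd {a : List ℕ} (hane : a ≠ []) {s n : ℕ} (hs : 0 < s) {b : List ℕ}
    (hb : b ∈ hdomSet n (a ++ [s])) :
    ∃ i, 1 ≤ i ∧ i < n ∧ ∃ c c', b = c ++ c' ∧ c ∈ hdomSet i a ∧ c' ∈ lastBigSet (n - i) s := by
  classical
  obtain ⟨⟨hpos, hsum⟩, hdom, hnd⟩ := hb
  obtain ⟨w, hwsub, hwf⟩ := hdom
  obtain ⟨w₀, m, rfl, hw₀, hsm⟩ := forall₂_app_singleton hwf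
  have hlena : 0 < a.length := List.length_pos_iff.mpr hane
  have hw₀len : w₀.length = a.length := hw₀.length_eq.symm
  have hblen : 2 ≤ b.length := by
    have h1 := hwsub.length_le
    simp at h1; omega
  have hnd' : ¬ Dominates b.dropLast (a ++ [s]) := by
    rcases hnd with h | h
    · omega
    · exact h
  have hex : ∃ k, Dominates (b.take k) a :=
    ⟨b.length - 1, by
      rw [← List.dropLast_eq_take]
      exact ⟨w₀, sublist_dropLast_of_concat_sublist hwsub, hw₀⟩⟩
  set k := Nat.find hex with hkdef
  have hkdom : Dominates (b.take k) a := Nat.find_spec hex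
  have hkle : k ≤ b.length - 1 := Nat.find_min' hex (by
    rw [← List.dropLast_eq_take]
    exact ⟨w₀, sublist_dropLast_of_concat_sublist hwsub, hw₀⟩)
  have hk1 : 1 ≤ k := by
    by_contra h0
    have hk0 : k = 0 := by omega
    have h2 := dominates_length_le hkdom
    rw [hk0, List.take_zero, List.length_nil] at h2
    omega
  set c := b.take k with hc
  set c' := b.drop k with hc'
  have hbcc : b = c ++ c' := (List.take_append_drop k b).symm
  have hclen : c.length = k := by
    simp [hc]; omega
  have hc'len : c'.length = b.length - k := by simp [hc']
  have hcdl : c.dropLast = b.take (k - 1) := by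
    rw [hc, List.dropLast_eq_take, List.take_take, hclen]
    congr 1; omega
  have hhc : HDominates c a := by
    refine ⟨hkdom, Or.inr ?_⟩
    rw [hcdl]
    exact Nat.find_min hex (by omega)
  have hcpos : ∀ x ∈ c, 0 < x := fun x hx => hpos x ((List.take_sublist _ _).subset hx)
  have hc'pos : ∀ x ∈ c', 0 < x := fun x hx => hpos x ((List.drop_sublist _ _).subset hx)
  have hc'ne : c' ≠ [] := by
    intro h; rw [h] at hc'len; simp at hc'len; omega
  have hcne : c ≠ [] := by
    intro h; rw [h] at hclen; simp at hclen; omega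
  have hc'sum1 : 1 ≤ c'.sum := one_le_sum hc'pos hc'ne
  have hcsum1 : 1 ≤ c.sum := one_le_sum hcpos hcne
  have hsumeq : c.sum + c'.sum = n := by rw [hbcc, List.sum_append] at hsum; omega
  rcases c'.eq_nil_or_concat with h | ⟨l, t, hlt⟩
  · exact absurd h hc'ne
  rw [List.concat_eq_append] at hlt
  have hdb : b.dropLast = c ++ l := by
    rw [hbcc, hlt, ← List.append_assoc, List.dropLast_concat]
  have hlsmall : ∀ x ∈ l, x < s := by
    intro x hx
    by_contra hxs
    push_neg at hxs
    apply hnd'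
    obtain ⟨wc, hwc, hwcf⟩ := hkdom
    refine ⟨wc ++ [x], ?_, ?_⟩
    · rw [hdb]
      exact hwc.append (List.singleton_sublist.mpr hx)
    · exact List.rel_append hwcf (by simpa using hxs)
  have hts : s ≤ t := by
    by_contra hts
    push_neg at hts
    apply hnd'
    have hsub2 : (w₀ ++ [m]).Sublist ((c ++ l) ++ [t]) := by
      rw [List.append_assoc, ← hlt, ← hbcc]; exact hwsub
    have := witness_in_left hsub2 hsm (by intro x hx; simp at hx; omega)
    rw [← hdb] at this
    exact ⟨w₀ ++ [m], this, hwf⟩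
  exact ⟨c.sum, hcsum1, by omega, c, c', hbcc, ⟨⟨hcpos, rfl⟩, hhc⟩,
    ⟨⟨hc'pos, by omega⟩, l, t, hlt, hlsmall, hts⟩⟩

lemma bwd {a : List ℕ} (hane : a ≠ []) {s n i : ℕ}
    (hi1 : 1 ≤ i) (hin : i < n) {c c' : List ℕ}
    (hc : c ∈ hdomSet i a) (hc' : c' ∈ lastBigSet (n - i) s) :
    c ++ c' ∈ hdomSet n (a ++ [s]) := by
  obtain ⟨⟨hcpos, hcsum⟩, hcdom, hch⟩ := hc
  obtain ⟨⟨hc'pos, hc'sum⟩, l, m, rfl, hl, hm⟩ := hc'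
  obtain ⟨w, hwsub, hwf⟩ := hcdom
  have hlena : 0 < a.length := List.length_pos_iff.mpr hane
  refine ⟨⟨?_, ?_⟩, ?_, Or.inr ?_⟩
  · intro x hx
    rcases List.mem_append.mp hx with h | h
    exacts [hcpos x h, hc'pos x h]
  · rw [List.sum_append, hcsum, hc'sum]
    omega
  · refine ⟨w ++ [m], ?_, List.rel_append hwf (by simpa using hm)⟩
    exact hwsub.append (List.singleton_sublist.mpr (by simp))
  · have hdl : (c ++ (l ++ [m])).dropLast = c ++ l := by
      rw [← List.append_assoc, List.dropLast_concat]
    rw [hdl]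
    rintro ⟨w', hw'sub, hw'f⟩
    obtain ⟨w₀, m', rfl, hw₀, hsm'⟩ := forall₂_app_singleton hw'f
    have h1 : (w₀ ++ [m']).Sublist c := witness_in_left hw'sub hsm' hl
    have h2 : w₀.Sublist c.dropLast := sublist_dropLast_of_concat_sublist h1
    rcases hch with hlen | hnd
    · have h3 := h1.length_le
      have h4 := hw₀.length_eq
      simp at h3 h4
      omega
    · exact hnd ⟨w₀, h2, hw₀⟩

lemma uniq_aux {a : List ℕ} (hane : a ≠ []) {i j : ℕ} {c₁ c₂ c₁' c₂' : List ℕ}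
    (h1 : c₁ ∈ hdomSet i a) (h2 : c₂ ∈ hdomSet j a)
    (heq : c₁ ++ c₁' = c₂ ++ c₂') (hlt : c₁.length < c₂.length) : False := by
  obtain ⟨_, hdom1, _⟩ := h1
  obtain ⟨_, _, hh2⟩ := h2
  have hlena : 0 < a.length := List.length_pos_iff.mpr hane
  have hp1 : c₁ <+: c₂ :=
    List.prefix_of_prefix_length_le ⟨c₁', heq⟩ ⟨c₂', rfl⟩ (le_of_lt hlt)
  have hsub : c₁.Sublist c₂.dropLast := by
    have hc1 : c₁ = (c₂.dropLast).take c₁.length := by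
      rw [List.dropLast_eq_take, List.take_take, min_eq_left (by omega)]
      exact List.prefix_iff_eq_take.mp hp1
    rw [hc1]
    exact (List.take_prefix _ _).sublist
  rcases hh2 with hlen | hnd
  · have := dominates_length_le hdom1
    omega
  · rcases hdom1 with ⟨w, hw, hwf⟩
    exact hnd ⟨w, hw.trans hsub, hwf⟩

theorem hdomSet_append_decomposition (a : List ℕ) (ha : ∀ x ∈ a, 0 < x) (hane : a ≠ [])
    (s : ℕ) (hs : 0 < s) (n : ℕ) (hn : 0 < n) :
    (hdomSet n (a ++ [s]) =
      ⋃ i ∈ Finset.Ico 1 n,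
        {b | ∃ c c' : List ℕ, b = c ++ c' ∧ c ∈ hdomSet i a ∧ c' ∈ lastBigSet (n - i) s}) ∧
    (∀ i ∈ Finset.Ico 1 n, ∀ j ∈ Finset.Ico 1 n, i ≠ j →
      Disjoint
        {b : List ℕ | ∃ c c' : List ℕ, b = c ++ c' ∧ c ∈ hdomSet i a ∧ c' ∈ lastBigSet (n - i) s}
        {b : List ℕ | ∃ c c' : List ℕ, b = c ++ c' ∧ c ∈ hdomSet j a ∧ c' ∈ lastBigSet (n - j) s}) := by
  constructor
  · ext b
    simp only [Set.mem_iUnion, Finset.mem_Ico, Set.mem_setOf_eq]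
    constructor
    · intro hb
      obtain ⟨i, h1, h2, c, c', hbcc, hc, hc'⟩ := fwd hane hs hb
      exact ⟨i, ⟨h1, h2⟩, c, c', hbcc, hc, hc'⟩
    · rintro ⟨i, ⟨h1, h2⟩, c, c', rfl, hc, hc'⟩
      exact bwd hane h1 h2 hc hc'
  · intro i hi j hj hij
    rw [Set.disjoint_left]
    rintro b ⟨c₁, c₁', rfl, hc₁, hc₁'⟩ ⟨c₂, c₂', heq, hc₂, hc₂'⟩
    have hsum1 : c₁.sum = i := hc₁.1.2
    have hsum2 : c₂.sum = j := hc₂.1.2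
    rcases lt_trichotomy c₁.length c₂.length with h | h | h
    · exact uniq_aux hane hc₁ hc₂ heq h
    · have := (List.append_inj heq h).1
      exact hij (by rw [← hsum1, ← hsum2, this])
    · exact uniq_aux hane hc₂ hc₁ heq.symm h
end

section
/- If a and a' are compositions and s is a positive integer such that (a,s) and (a',s) are dominating equivalent, then a and a' are dominating equivalent. -/
namespace DomAux

def cut : List ℕ → List ℕ → Option (List ℕ)
  | [], b => some b
  | _ :: _, [] => none
  | x :: a, c :: b => if x ≤ c then cut a b else cut (x :: a) b

theorem cut_nil (b : List ℕ) : cut [] b = some b := by simp [cut]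

theorem cut_sublist : ∀ {a b r : List ℕ}, cut a b = some r → r.Sublist b := by
  intro a b
  induction b generalizing a with
  | nil =>
    intro r h
    cases a with
    | nil => simp [cut] at h; simp [h]
    | cons x a => simp [cut] at h
  | cons c b ih =>
    intro r h
    cases a with
    | nil => simp [cut] at h; simp [h]
    | cons x a =>
      by_cases hxc : x ≤ c
      · simp [cut, hxc] at h
        exact (ih h).trans (List.sublist_cons_self c b)
      · simp [cut, hxc] at h
        exact (ih h).trans (List.sublist_cons_self c b)

/-- Monotonicity of greedy matching. -/
theorem cut_mono : ∀ {b₁ a₁ a₂ b₂ r₂ : List ℕ}, a₁.Sublist a₂ → b₂.Sublist b₁ →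
    cut a₂ b₂ = some r₂ → ∃ r₁, cut a₁ b₁ = some r₁ ∧ r₂.Sublist r₁ := by
  intro b₁
  induction b₁ with
  | nil =>
    intro a₁ a₂ b₂ r₂ ha hb hc
    rw [List.sublist_nil] at hb
    subst hb
    cases a₂ with
    | nil =>
      rw [List.sublist_nil] at ha; subst ha
      simp [cut] at hc ⊢; simpa using hc
    | cons x a => simp [cut] at hc
  | cons c b₁ ih =>
    intro a₁ a₂ b₂ r₂ ha hb hc
    cases hb with
    | cons _ hb =>
      -- b₂ <+ b₁
      cases a₁ with
      | nil =>
        refine ⟨c :: b₁, cut_nil _, ?_⟩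
        exact ((cut_sublist hc).trans hb).trans (List.sublist_cons_self c b₁)
      | cons y a₁' =>
        by_cases hyc : y ≤ c
        · simp only [cut, if_pos hyc]
          exact ih ((List.sublist_cons_self y a₁').trans ha) hb hc
        · simp only [cut, if_neg hyc]
          exact ih ha hb hc
    | cons_cons _ hb =>
      -- b₂ = c :: b₂', b₂' <+ b₁
      rename_i b₂'
      cases a₂ with
      | nil =>
        rw [List.sublist_nil] at ha; subst ha
        rw [cut_nil] at hc
        obtain rfl : c :: b₂' = r₂ := by injection hc
        exact ⟨c :: b₁, cut_nil _, hb.cons₂ c⟩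
      | cons z a₂' =>
        by_cases hzc : z ≤ c
        · simp only [cut, if_pos hzc] at hc
          -- hc : cut a₂' b₂' = some r₂
          cases a₁ with
          | nil =>
            refine ⟨c :: b₁, cut_nil _, ?_⟩
            exact (((cut_sublist hc).trans hb).trans (List.sublist_cons_self c b₁))
          | cons y a₁' =>
            have ha1'2' : a₁'.Sublist a₂' := by
              cases ha with
              | cons _ h => exact (List.sublist_cons_self y a₁').trans h
              | cons_cons _ h => exact h
            by_cases hyc : y ≤ c
            · simp only [cut, if_pos hyc]
              exact ih ha1'2' hb hc
            · simp only [cut, if_neg hyc]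
              cases ha with
              | cons _ h => exact ih h hb hc
              | cons_cons _ h => omega
        · simp only [cut, if_neg hzc] at hc
          -- hc : cut (z :: a₂') b₂' = some r₂
          cases a₁ with
          | nil =>
            refine ⟨c :: b₁, cut_nil _, ?_⟩
            exact (((cut_sublist hc).trans hb).trans (List.sublist_cons_self c b₁))
          | cons y a₁' =>
            by_cases hyc : y ≤ c
            · simp only [cut, if_pos hyc]
              exact ih ((List.sublist_cons_self y a₁').trans ha) hb hc
            · simp only [cut, if_neg hyc]
              exact ih ha hb hc

/-- Exact matching consumes exactly the matched prefix. -/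
theorem cut_forall₂ {a b₁ : List ℕ} (h : List.Forall₂ (· ≤ ·) a b₁) (b₂ : List ℕ) :
    cut a (b₁ ++ b₂) = some b₂ := by
  induction h with
  | nil => simp [cut]
  | cons hxy _ ih => simpa [cut, hxy] using ih

theorem dominates_of_cut : ∀ {a b r : List ℕ}, cut a b = some r → Dominates b a := by
  intro a b
  induction b generalizing a with
  | nil =>
    intro r h
    cases a with
    | nil => exact ⟨[], List.Sublist.refl _, List.Forall₂.nil⟩
    | cons x a => simp [cut] at h
  | cons c b ih =>
    intro r h
    cases a with
    | nil => exact ⟨[], List.nil_sublist _, List.Forall₂.nil⟩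
    | cons x a =>
      by_cases hxc : x ≤ c
      · simp only [cut, if_pos hxc] at h
        obtain ⟨b', hb', hf⟩ := ih h
        exact ⟨c :: b', hb'.cons₂ c, List.Forall₂.cons hxc hf⟩
      · simp only [cut, if_neg hxc] at h
        obtain ⟨b', hb', hf⟩ := ih h
        exact ⟨b', hb'.cons c, hf⟩

theorem dominates_iff {b a : List ℕ} : Dominates b a ↔ (cut a b).isSome := by
  constructor
  · rintro ⟨b', hb', hf⟩
    have h1 : cut a (b' ++ []) = some [] := cut_forall₂ hf []
    rw [List.append_nil] at h1
    obtain ⟨r, hr, -⟩ := cut_mono (List.Sublist.refl a) hb' h1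
    simp [hr]
  · intro h
    rw [Option.isSome_iff_exists] at h
    obtain ⟨r, hr⟩ := h
    exact dominates_of_cut hr

instance decidableDominates (b a : List ℕ) : Decidable (Dominates b a) :=
  decidable_of_iff _ dominates_iff.symm

/-- Greedy matching leaves a literal suffix. -/
theorem cut_decomp : ∀ {a b r : List ℕ}, cut a b = some r →
    ∃ p, b = p ++ r ∧ cut a p = some [] := by
  intro a b
  induction b generalizing a with
  | nil =>
    intro r h
    cases a with
    | nil => simp [cut] at h; exact ⟨[], by simp [h], cut_nil []⟩
    | cons x a => simp [cut] at h
  | cons c b ih =>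
    intro r h
    cases a with
    | nil =>
      simp [cut] at h
      exact ⟨[], by simp [h], cut_nil []⟩
    | cons x a =>
      by_cases hxc : x ≤ c
      · simp only [cut, if_pos hxc] at h
        obtain ⟨p, rfl, hp⟩ := ih h
        exact ⟨c :: p, rfl, by simp [cut, hxc, hp]⟩
      · simp only [cut, if_neg hxc] at h
        obtain ⟨p, rfl, hp⟩ := ih h
        exact ⟨c :: p, rfl, by simp [cut, hxc, hp]⟩

/-- If greedy matching finishes inside `p`, appending `r` just appends to the remainder. -/
theorem cut_append : ∀ {a p q : List ℕ}, cut a p = some q →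
    ∀ r, cut a (p ++ r) = some (q ++ r) := by
  intro a p
  induction p generalizing a with
  | nil =>
    intro q h r
    cases a with
    | nil =>
      rw [cut_nil] at h; obtain rfl := Option.some.inj h; exact cut_nil _
    | cons x a => simp [cut] at h
  | cons c p ih =>
    intro q h r
    cases a with
    | nil =>
      rw [cut_nil] at h; obtain rfl := Option.some.inj h; exact cut_nil _
    | cons x a =>
      by_cases hxc : x ≤ c
      · simp only [cut, if_pos hxc, List.cons_append] at h ⊢
        exact ih h r
      · simp only [cut, if_neg hxc, List.cons_append] at h ⊢
        exact ih h r

/-- Splitting a Forall₂ along an append on the left. -/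
theorem forall₂_append_split {R : ℕ → ℕ → Prop} : ∀ {a t b : List ℕ},
    List.Forall₂ R (a ++ t) b → ∃ b₁ b₂, b = b₁ ++ b₂ ∧
      List.Forall₂ R a b₁ ∧ List.Forall₂ R t b₂ := by
  intro a
  induction a with
  | nil => intro t b h; exact ⟨[], b, rfl, List.Forall₂.nil, h⟩
  | cons x a ih =>
    intro t b h
    cases h with
    | cons hxy h =>
      rename_i y b'
      obtain ⟨b₁, b₂, rfl, h1, h2⟩ := ih h
      exact ⟨y :: b₁, b₂, rfl, List.Forall₂.cons hxy h1, h2⟩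

/-- The key splitting characterization for domination of an append. -/
theorem dominates_append_iff {b a t : List ℕ} :
    Dominates b (a ++ t) ↔ ∃ r, cut a b = some r ∧ Dominates r t := by
  constructor
  · rintro ⟨b', hb', hf⟩
    obtain ⟨b₁, b₂, rfl, h1, h2⟩ := forall₂_append_split hf
    have hcut : cut a (b₁ ++ b₂) = some b₂ := cut_forall₂ h1 b₂
    obtain ⟨r, hr, hsub⟩ := cut_mono (List.Sublist.refl a) hb' hcut
    exact ⟨r, hr, ⟨b₂, hsub, h2⟩⟩
  · rintro ⟨r, hr, ⟨r', hr', hf'⟩⟩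
    obtain ⟨p, rfl, hp⟩ := cut_decomp hr
    obtain ⟨b₁, hb₁, hf₁⟩ := dominates_of_cut hp
    exact ⟨b₁ ++ r', List.Sublist.append hb₁ hr', List.rel_append hf₁ hf'⟩

theorem dominates_singleton_iff {r : List ℕ} {s : ℕ} :
    Dominates r [s] ↔ ∃ y ∈ r, s ≤ y := by
  constructor
  · rintro ⟨b', hb', hf⟩
    cases hf with
    | cons hsy hf =>
      cases hf
      rename_i y
      exact ⟨y, (List.singleton_sublist).1 hb', hsy⟩
  · rintro ⟨y, hy, hsy⟩
    exact ⟨[y], List.singleton_sublist.2 hy, List.Forall₂.cons hsy List.Forall₂.nil⟩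

/-! ### Counting -/

open Finset

instance decCutEx (a b : List ℕ) (Q : List ℕ → Prop) [DecidablePred Q] :
    Decidable (∃ r, cut a b = some r ∧ Q r) :=
  match h : cut a b with
  | none => .isFalse (by rintro ⟨r, hr, -⟩; simp_all)
  | some r => decidable_of_iff (Q r) (by simp)

/-- The finset of compositions of `n`. -/
def comps (n : ℕ) : Finset (List ℕ) :=
  Finset.univ.image (fun c : Composition n => c.blocks)

theorem mem_comps {n : ℕ} {l : List ℕ} : l ∈ comps n ↔ IsComposition n l := by
  simp only [comps, Finset.mem_image, Finset.mem_univ, true_and]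
  constructor
  · rintro ⟨c, rfl⟩; exact ⟨fun x hx => c.blocks_pos hx, c.blocks_sum⟩
  · rintro ⟨h1, h2⟩; exact ⟨⟨l, fun hx => h1 _ hx, h2⟩, rfl⟩

theorem ncard_domSet (n : ℕ) (a : List ℕ) :
    (domSet n a).ncard = ((comps n).filter (fun b => Dominates b a)).card := by
  rw [← Set.ncard_coe_finset]
  congr 1
  ext b
  simp [domSet, mem_comps]

/-- Compositions of `k` which are exactly (greedily, with no remainder) dominating `a`. -/
def minset (a : List ℕ) (k : ℕ) : Finset (List ℕ) :=
  (comps k).filter (fun p => cut a p = some [])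

/-- The main convolution identity. -/
theorem conv (a : List ℕ) (Q : List ℕ → Prop) [DecidablePred Q] (n : ℕ) :
    ((comps n).filter (fun b => ∃ r, cut a b = some r ∧ Q r)).card
      = ∑ k ∈ Finset.range (n + 1), (minset a k).card * ((comps (n - k)).filter Q).card := by
  classical
  have := Finset.card_bij
    (s := (Finset.range (n + 1)).sigma
      (fun k => (minset a k) ×ˢ ((comps (n - k)).filter Q)))
    (t := (comps n).filter (fun b => ∃ r, cut a b = some r ∧ Q r))
    (i := fun x _ => x.2.1 ++ x.2.2) ?_ ?_ ?_
  · rw [← this, Finset.card_sigma]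
    refine Finset.sum_congr rfl (fun k _ => ?_)
    rw [Finset.card_product]
  · rintro ⟨k, p, r⟩ hx
    simp only [Finset.mem_sigma, Finset.mem_range, Finset.mem_product, minset,
      Finset.mem_filter, mem_comps] at hx
    obtain ⟨hk, ⟨⟨hppos, hpsum⟩, hpcut⟩, ⟨⟨hrpos, hrsum⟩, hQ⟩⟩ := hx
    simp only [Finset.mem_filter, mem_comps]
    refine ⟨⟨?_, ?_⟩, ⟨r, ?_, hQ⟩⟩
    · intro x hx
      rcases List.mem_append.1 hx with h | h
      · exact hppos x h
      · exact hrpos x h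
    · rw [List.sum_append, hpsum, hrsum]; omega
    · have := cut_append hpcut r
      simpa using this
  · rintro ⟨k₁, p₁, r₁⟩ h₁ ⟨k₂, p₂, r₂⟩ h₂ heq
    simp only [Finset.mem_sigma, Finset.mem_range, Finset.mem_product, minset,
      Finset.mem_filter, mem_comps] at h₁ h₂
    obtain ⟨hk₁, ⟨⟨hp1pos, hp1sum⟩, hp1cut⟩, -⟩ := h₁
    obtain ⟨hk₂, ⟨⟨hp2pos, hp2sum⟩, hp2cut⟩, -⟩ := h₂
    have hc1 : cut a (p₁ ++ r₁) = some r₁ := by simpa using cut_append hp1cut r₁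
    have hc2 : cut a (p₂ ++ r₂) = some r₂ := by simpa using cut_append hp2cut r₂
    simp only at heq
    have hr : r₁ = r₂ := by
      rw [heq] at hc1
      exact Option.some.inj (hc1.symm.trans hc2)
    subst hr
    have hp : p₁ = p₂ := (List.append_left_inj r₁).1 heq
    subst hp
    have hk : k₁ = k₂ := by rw [← hp1sum, ← hp2sum]
    subst hk
    rfl
  · intro b hb
    simp only [Finset.mem_filter, mem_comps] at hb
    obtain ⟨⟨hbpos, hbsum⟩, r, hcut, hQ⟩ := hb
    obtain ⟨p, rfl, hp⟩ := cut_decomp hcut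
    refine ⟨⟨p.sum, p, r⟩, ?_, rfl⟩
    simp only [Finset.mem_sigma, Finset.mem_range, Finset.mem_product, minset,
      Finset.mem_filter, mem_comps]
    rw [List.sum_append] at hbsum
    refine ⟨by omega, ⟨⟨fun x hx => hbpos x (List.mem_append.2 (Or.inl hx)), rfl⟩, hp⟩,
      ⟨⟨fun x hx => hbpos x (List.mem_append.2 (Or.inr hx)), by omega⟩, hQ⟩⟩

theorem card_dom_append (a : List ℕ) (s n : ℕ) :
    ((comps n).filter (fun b => Dominates b (a ++ [s]))).card
      = ∑ k ∈ Finset.range (n + 1), (minset a k).card *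
          ((comps (n - k)).filter (fun r => ∃ y ∈ r, s ≤ y)).card := by
  have h1 : (comps n).filter (fun b => Dominates b (a ++ [s]))
      = (comps n).filter (fun b => ∃ r, cut a b = some r ∧ ∃ y ∈ r, s ≤ y) := by
    refine Finset.filter_congr (fun b _ => ?_)
    rw [dominates_append_iff]
    simp only [dominates_singleton_iff]
  rw [h1, conv]

theorem card_dom_plain (a : List ℕ) (n : ℕ) :
    ((comps n).filter (fun b => Dominates b a)).card
      = ∑ k ∈ Finset.range (n + 1), (minset a k).card * (comps (n - k)).card := by
  have h1 : (comps n).filter (fun b => Dominates b a)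
      = (comps n).filter (fun b => ∃ r, cut a b = some r ∧ True) := by
    refine Finset.filter_congr (fun b _ => ?_)
    rw [dominates_iff, Option.isSome_iff_exists]
    simp
  rw [h1, conv]
  refine Finset.sum_congr rfl (fun k _ => ?_)
  rw [Finset.filter_true_of_mem (fun _ _ => trivial)]

theorem Hcard_zero {s j : ℕ} (hj : j < s) :
    ((comps j).filter (fun r => ∃ y ∈ r, s ≤ y)).card = 0 := by
  rw [Finset.card_eq_zero, Finset.filter_eq_empty_iff]
  rintro r hr ⟨y, hy, hsy⟩
  obtain ⟨-, hsum⟩ := mem_comps.1 hr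
  have : y ≤ r.sum := List.single_le_sum (fun x _ => Nat.zero_le x) y hy
  omega

theorem Hcard_s {s : ℕ} (hs : 0 < s) :
    ((comps s).filter (fun r => ∃ y ∈ r, s ≤ y)).card = 1 := by
  rw [Finset.card_eq_one]
  refine ⟨[s], ?_⟩
  ext r
  simp only [Finset.mem_filter, mem_comps, Finset.mem_singleton]
  constructor
  · rintro ⟨⟨hpos, hsum⟩, y, hy, hsy⟩
    have hys : y ≤ r.sum := List.single_le_sum (fun x _ => Nat.zero_le x) y hy
    have hy' : y = s := by omega
    subst hy'
    obtain ⟨u, v, rfl⟩ := List.append_of_mem hy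
    rw [List.sum_append, List.sum_cons] at hsum
    have hu : u = [] := by
      cases u with
      | nil => rfl
      | cons x u =>
        have := hpos x (by simp)
        rw [List.sum_cons] at hsum
        omega
    have hv : v = [] := by
      cases v with
      | nil => rfl
      | cons x v =>
        have := hpos x (by simp)
        rw [List.sum_cons] at hsum
        omega
    simp [hu, hv]
  · rintro rfl
    exact ⟨⟨by simpa using hs, by simp⟩, s, by simp, le_refl s⟩

theorem minset_card_eq (a a' : List ℕ) (s : ℕ) (hs : 0 < s)
    (h : ∀ n : ℕ, 0 < n →
      ((comps n).filter (fun b => Dominates b (a ++ [s]))).card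
        = ((comps n).filter (fun b => Dominates b (a' ++ [s]))).card) :
    ∀ k, (minset a k).card = (minset a' k).card := by
  intro k
  induction k using Nat.strong_induction_on with
  | _ k ih =>
    have hg := h (k + s) (by omega)
    rw [card_dom_append, card_dom_append] at hg
    have key : ∀ Mf : ℕ → ℕ,
        ∑ j ∈ Finset.range (k + s + 1), Mf j *
            ((comps (k + s - j)).filter (fun r => ∃ y ∈ r, s ≤ y)).card
          = (∑ j ∈ Finset.range k, Mf j *
            ((comps (k + s - j)).filter (fun r => ∃ y ∈ r, s ≤ y)).card) + Mf k := by
      intro Mf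
      rw [← Finset.sum_subset (Finset.range_subset_range.2 (by omega : k + 1 ≤ k + s + 1))
        (fun j _ hj => ?_), Finset.sum_range_succ]
      · congr 1
        have : k + s - k = s := by omega
        rw [this, Hcard_s hs, mul_one]
      · rw [Finset.mem_range] at hj
        rw [Hcard_zero (by omega : k + s - j < s), mul_zero]
    rw [key, key] at hg
    have hsum : ∑ j ∈ Finset.range k, (minset a j).card *
          ((comps (k + s - j)).filter (fun r => ∃ y ∈ r, s ≤ y)).card
        = ∑ j ∈ Finset.range k, (minset a' j).card *
          ((comps (k + s - j)).filter (fun r => ∃ y ∈ r, s ≤ y)).card := by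
      refine Finset.sum_congr rfl (fun j hj => ?_)
      rw [ih j (Finset.mem_range.1 hj)]
    omega

end DomAux

theorem domEquiv_of_append (a a' : List ℕ)
    (ha : ∀ x ∈ a, 0 < x) (ha' : ∀ x ∈ a', 0 < x)
    (hane : a ≠ []) (ha'ne : a' ≠ []) (s : ℕ) (hs : 0 < s)
    (h : ∀ n : ℕ, 0 < n →
      (domSet n (a ++ [s])).ncard = (domSet n (a' ++ [s])).ncard) :
    ∀ n : ℕ, 0 < n → (domSet n a).ncard = (domSet n a').ncard := by
  intro n hn
  have h' : ∀ n : ℕ, 0 < n →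
      ((DomAux.comps n).filter (fun b => Dominates b (a ++ [s]))).card
        = ((DomAux.comps n).filter (fun b => Dominates b (a' ++ [s]))).card := by
    intro m hm
    have := h m hm
    rwa [DomAux.ncard_domSet, DomAux.ncard_domSet] at this
  rw [DomAux.ncard_domSet, DomAux.ncard_domSet, DomAux.card_dom_plain,
    DomAux.card_dom_plain]
  refine Finset.sum_congr rfl (fun k _ => ?_)
  rw [DomAux.minset_card_eq a a' s hs h' k]
end

section
/- Let a = (a_1,...,a_m) be a composition of n with a_1 ≥ a_2 ≥ ... ≥ a_m and a_m ≥ 2. Then |D_{n+1}(a)| = 2m + 1. -/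
private lemma forall₂_eq_of_sum_le {a b : List ℕ} (h : List.Forall₂ (· ≤ ·) a b) :
    b.sum ≤ a.sum → a = b := by
  induction h with
  | nil => intro _; rfl
  | @cons x y a' b' hxy h ih =>
    intro hs
    simp only [List.sum_cons] at hs
    have h1 : a'.sum ≤ b'.sum := h.sum_le_sum
    have hx : x = y := by omega
    rw [hx, ih (by omega)]

private lemma sublist_eq_of_sum_le {a b : List ℕ} (h : a.Sublist b) :
    (∀ x ∈ b, 0 < x) → b.sum ≤ a.sum → a = b := by
  induction h with
  | slnil => intro _ _; rfl
  | @cons a' b' y hsub ih =>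
    intro hpos hs
    exfalso
    have h1 : a'.sum ≤ b'.sum := hsub.sum_le_sum (by simp)
    have hy : 0 < y := hpos y (by simp)
    simp only [List.sum_cons] at hs
    omega
  | @cons_cons a' b' y hsub ih =>
    intro hpos hs
    simp only [List.sum_cons] at hs
    rw [ih (fun x hx => hpos x (List.mem_cons_of_mem _ hx)) (by omega)]

private lemma forall₂_sum_succ {a b : List ℕ} (h : List.Forall₂ (· ≤ ·) a b) :
    b.sum = a.sum + 1 →
    ∃ k, ∃ hk : k < a.length, b = a.take k ++ (a[k] + 1) :: a.drop (k + 1) := by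
  induction h with
  | nil => intro hs; simp at hs
  | @cons x y a' b' hxy h ih =>
    intro hs
    simp only [List.sum_cons] at hs
    have hle : a'.sum ≤ b'.sum := h.sum_le_sum
    rcases eq_or_lt_of_le hxy with heq | hlt
    · subst heq
      obtain ⟨k, hk, hb⟩ := ih (by omega)
      refine ⟨k + 1, by simpa using hk, ?_⟩
      simp [hb]
    · have hy : y = x + 1 := by omega
      have heq2 : a' = b' := forall₂_eq_of_sum_le h (by omega)
      exact ⟨0, by simp, by simp [hy, ← heq2]⟩

private lemma sublist_sum_succ {a b : List ℕ} (h : a.Sublist b) :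
    (∀ x ∈ b, 0 < x) → b.sum = a.sum + 1 →
    ∃ k, k ≤ a.length ∧ b = a.take k ++ 1 :: a.drop k := by
  induction h with
  | slnil => intro _ hs; simp at hs
  | @cons a' b' y hsub ih =>
    intro hpos hs
    have h1 : a'.sum ≤ b'.sum := hsub.sum_le_sum (by simp)
    have hy : 0 < y := hpos y (by simp)
    simp only [List.sum_cons] at hs
    have hy1 : y = 1 := by omega
    have heq : a' = b' := sublist_eq_of_sum_le hsub
      (fun x hx => hpos x (List.mem_cons_of_mem _ hx)) (by omega)
    exact ⟨0, Nat.zero_le _, by simp [hy1, ← heq]⟩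
  | @cons_cons a' b' y hsub ih =>
    intro hpos hs
    simp only [List.sum_cons] at hs
    obtain ⟨k, hk, hb⟩ := ih (fun x hx => hpos x (List.mem_cons_of_mem _ hx)) (by omega)
    refine ⟨k + 1, by simpa using hk, ?_⟩
    simp [hb]

private lemma two_le_of_mem {a : List ℕ} (hane : a ≠ []) (hsort : a.Pairwise (· ≥ ·))
    (hlast : 2 ≤ a.getLast hane) : ∀ x ∈ a, 2 ≤ x := by
  intro x hx
  have hdec := List.dropLast_append_getLast hane
  rw [← hdec] at hx hsort
  rw [List.pairwise_append] at hsort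
  rcases List.mem_append.1 hx with h | h
  · exact le_trans hlast (hsort.2.2 x h _ (by simp))
  · simp only [List.mem_singleton] at h
    omega

private lemma getD_mid (l₁ l₂ : List ℕ) (x i : ℕ) (h : l₁.length = i) :
    (l₁ ++ x :: l₂).getD i 0 = x := by
  subst h
  rw [List.getD_eq_getElem _ _ (by simp), List.getElem_append_right le_rfl]
  simp

private lemma getD_left (l₁ l₂ : List ℕ) (i : ℕ) (h : i < l₁.length) :
    (l₁ ++ l₂).getD i 0 = l₁.getD i 0 := by
  rw [List.getD_eq_getElem _ _ (by simp; omega), List.getD_eq_getElem _ _ h,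
    List.getElem_append_left h]

theorem domSet_succ_card_of_last_ge_two (n : ℕ) (a : List ℕ) (hane : a ≠ [])
    (ha : IsComposition n a) (hsort : a.Pairwise (· ≥ ·))
    (hlast : 2 ≤ a.getLast hane) :
    (domSet (n + 1) a).ncard = 2 * a.length + 1 := by
  classical
  obtain ⟨hapos, hasum⟩ := ha
  have h2 : ∀ x ∈ a, 2 ≤ x := two_le_of_mem hane hsort hlast
  set m := a.length with hm
  set f : ℕ → List ℕ := fun k => a.take k ++ (a.getD k 0 + 1) :: a.drop (k + 1) with hf
  set g : ℕ → List ℕ := fun k => a.take k ++ 1 :: a.drop k with hg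
  -- decomposition of a at index k
  have hdec : ∀ k, (hk : k < m) → a.take k ++ a[k] :: a.drop (k + 1) = a := by
    intro k hk
    conv_rhs => rw [← List.take_append_drop k a]
    rw [List.drop_eq_getElem_cons hk]
  have hlenf : ∀ k, k < m → (f k).length = m := by
    intro k hk
    simp only [hf, List.length_append, List.length_take, List.length_cons, List.length_drop]
    omega
  have hleng : ∀ k, k ≤ m → (g k).length = m + 1 := by
    intro k hk
    simp only [hg, List.length_append, List.length_take, List.length_cons, List.length_drop]
    omega
  have key : domSet (n + 1) a =
      ↑((Finset.range m).image f ∪ (Finset.range (m + 1)).image g) := by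
    ext b
    simp only [domSet, Set.mem_setOf_eq, Finset.coe_union, Set.mem_union, Finset.coe_image,
      Set.mem_image, Finset.mem_coe, Finset.mem_range]
    constructor
    · rintro ⟨⟨hbpos, hbsum⟩, b', hsub, hfa⟩
      have h1 : b'.sum ≤ n + 1 := by
        have := hsub.sum_le_sum (by simp)
        omega
      have h2' : n ≤ b'.sum := by
        have := hfa.sum_le_sum
        omega
      rcases Nat.lt_or_ge b'.sum (n + 1) with hc | hc
      · -- b'.sum = n : insertion case
        right
        have hab : a = b' := forall₂_eq_of_sum_le hfa (by omega)
        subst hab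
        obtain ⟨k, hk, hb⟩ := sublist_sum_succ hsub hbpos (by omega)
        exact ⟨k, by omega, hb.symm⟩
      · -- b'.sum = n + 1 : increment case
        left
        have hbb : b' = b := sublist_eq_of_sum_le hsub hbpos (by omega)
        subst hbb
        obtain ⟨k, hk, hb⟩ := forall₂_sum_succ hfa (by omega)
        refine ⟨k, hk, ?_⟩
        rw [hf]
        simp only [List.getD_eq_getElem a 0 hk]
        exact hb.symm
    · rintro (⟨k, hk, rfl⟩ | ⟨k, hk, rfl⟩)
      · -- increment
        have hgd : a.getD k 0 = a[k] := List.getD_eq_getElem a 0 hk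
        have hsum : (f k).sum = n + 1 := by
          have := congrArg List.sum (hdec k hk)
          simp only [List.sum_append, List.sum_cons] at this ⊢
          simp only [hf, List.sum_append, List.sum_cons, hgd]
          omega
        refine ⟨⟨?_, hsum⟩, f k, List.Sublist.refl _, ?_⟩
        · intro x hx
          simp only [hf, List.mem_append, List.mem_cons] at hx
          rcases hx with h | h | h
          · exact hapos x (List.mem_of_mem_take h)
          · omega
          · exact hapos x (List.mem_of_mem_drop h)
        · conv_lhs => rw [← hdec k hk]
          rw [hf]
          exact List.rel_append (List.forall₂_refl _)
            (List.Forall₂.cons (by omega) (List.forall₂_refl _))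
      · -- insertion
        have hk' : k ≤ m := by omega
        have hsum : (g k).sum = n + 1 := by
          have := congrArg List.sum (List.take_append_drop k a)
          simp only [List.sum_append] at this
          simp only [hg, List.sum_append, List.sum_cons]
          omega
        refine ⟨⟨?_, hsum⟩, a, ?_, List.forall₂_refl _⟩
        · intro x hx
          simp only [hg, List.mem_append, List.mem_cons] at hx
          rcases hx with h | h | h
          · exact hapos x (List.mem_of_mem_take h)
          · omega
          · exact hapos x (List.mem_of_mem_drop h)
        · conv_lhs => rw [← List.take_append_drop k a]
          exact (List.sublist_cons_self 1 _).append_left _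
  have hfneq : ∀ i j, i < j → j < m → f i ≠ f j := by
    intro i j hlt hj hij
    have hi : i < m := by omega
    have hval : (f i).getD i 0 = (f j).getD i 0 := by rw [hij]
    have hL : (f i).getD i 0 = a.getD i 0 + 1 := by
      simp only [hf]
      exact getD_mid (a.take i) (a.drop (i + 1)) (a.getD i 0 + 1) i (by simp; omega)
    have h1 : i < (a.take j).length := by simp; omega
    have hR : (f j).getD i 0 = a.getD i 0 := by
      simp only [hf]
      rw [getD_left (a.take j) _ i h1, List.getD_eq_getElem (a.take j) 0 h1,
        List.getD_eq_getElem a 0 (by omega)]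
      exact List.getElem_take
    omega
  have hgneq : ∀ i j, i < j → j < m + 1 → g i ≠ g j := by
    intro i j hlt hj hij
    have hi : i < m := by omega
    have hval : (g i).getD i 0 = (g j).getD i 0 := by rw [hij]
    have hL : (g i).getD i 0 = 1 := by
      simp only [hg]
      exact getD_mid (a.take i) (a.drop i) 1 i (by simp; omega)
    have h1 : i < (a.take j).length := by simp; omega
    have hR : (g j).getD i 0 = a.getD i 0 := by
      simp only [hg]
      rw [getD_left (a.take j) _ i h1, List.getD_eq_getElem (a.take j) 0 h1,
        List.getD_eq_getElem a 0 (by omega)]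
      exact List.getElem_take
    have h2i : 2 ≤ a.getD i 0 := by
      rw [List.getD_eq_getElem _ _ (by omega)]
      exact h2 _ (List.getElem_mem hi)
    omega
  have hinjf : Set.InjOn f ↑(Finset.range m) := by
    intro i hi j hj hij
    simp only [Finset.coe_range, Set.mem_Iio] at hi hj
    rcases lt_trichotomy i j with h | h | h
    · exact absurd hij (hfneq i j h hj)
    · exact h
    · exact absurd hij.symm (hfneq j i h hi)
  have hinjg : Set.InjOn g ↑(Finset.range (m + 1)) := by
    intro i hi j hj hij
    simp only [Finset.coe_range, Set.mem_Iio] at hi hj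
    rcases lt_trichotomy i j with h | h | h
    · exact absurd hij (hgneq i j h hj)
    · exact h
    · exact absurd hij.symm (hgneq j i h hi)
  have hdisj : Disjoint ((Finset.range m).image f) ((Finset.range (m + 1)).image g) := by
    rw [Finset.disjoint_left]
    rintro b hb1 hb2
    simp only [Finset.mem_image, Finset.mem_range] at hb1 hb2
    obtain ⟨i, hi, rfl⟩ := hb1
    obtain ⟨j, hj, hgj⟩ := hb2
    have l1 := hlenf i hi
    have l2 := hleng j (by omega)
    rw [hgj] at l2
    omega
  rw [key, Set.ncard_coe_finset, Finset.card_union_of_disjoint hdisj,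
    Finset.card_image_of_injOn hinjf, Finset.card_image_of_injOn hinjg,
    Finset.card_range, Finset.card_range]
  omega
end

section
/- Let a = (a_1,...,a_m) be a composition of n with a_1 ≥ a_2 ≥ ... ≥ a_m, a_{m-1} ≥ 2 (if m ≥ 2), and a_m = 1. Then |D_{n+1}(a)| = 2m. -/
namespace DomAux

open List

lemma insertIdx_eq_take_cons_drop (v : ℕ) :
    ∀ (i : ℕ) (l : List ℕ), i ≤ l.length → l.insertIdx i v = l.take i ++ v :: l.drop i
  | 0, l, _ => by simp
  | (i+1), [], h => by simp at h
  | (i+1), x :: l, h => by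
      rw [insertIdx_succ_cons, insertIdx_eq_take_cons_drop v i l (by simpa using h)]
      simp

lemma sum_insertIdx (v i : ℕ) (l : List ℕ) (h : i ≤ l.length) :
    (l.insertIdx i v).sum = l.sum + v := by
  rw [insertIdx_eq_take_cons_drop v i l h]
  have := List.take_append_drop i l
  calc (l.take i ++ v :: l.drop i).sum = (l.take i).sum + (v + (l.drop i).sum) := by simp
    _ = l.sum + v := by
        have : (l.take i).sum + (l.drop i).sum = l.sum := by
          rw [← List.sum_append, List.take_append_drop]
        omega

lemma sublist_insertIdx (v i : ℕ) (l : List ℕ) (h : i ≤ l.length) :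
    l <+ l.insertIdx i v := by
  rw [insertIdx_eq_take_cons_drop v i l h]
  conv_lhs => rw [← List.take_append_drop i l]
  exact (Sublist.refl _).append (List.sublist_cons_self v _)

lemma sublist_sum_le {a b : List ℕ} (h : a <+ b) : a.sum ≤ b.sum := by
  induction h with
  | slnil => simp
  | cons x h ih => simp only [List.sum_cons]; omega
  | cons_cons x h ih => simp only [List.sum_cons]; omega

lemma forall2_sum_le {a b : List ℕ} (h : List.Forall₂ (· ≤ ·) a b) : a.sum ≤ b.sum := by
  induction h with
  | nil => simp
  | cons hxy htl ih => simp only [List.sum_cons]; omega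

lemma forall2_eq_of_sum {a b : List ℕ} (h : List.Forall₂ (· ≤ ·) a b)
    (hs : b.sum ≤ a.sum) : a = b := by
  induction h with
  | nil => rfl
  | @cons x y a' b' hxy htl ih =>
      have h1 := forall2_sum_le htl
      simp only [List.sum_cons] at hs
      have hx : x = y := by omega
      have := ih (by omega)
      rw [hx, this]

lemma sublist_eq_of_sum {a b : List ℕ} (h : a <+ b) (hpos : ∀ x ∈ b, 0 < x)
    (hs : b.sum ≤ a.sum) : a = b := by
  induction h with
  | slnil => rfl
  | @cons l₁ l₂ x h ih =>
      have h1 := sublist_sum_le h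
      have hx : 0 < x := hpos x (by simp)
      simp only [List.sum_cons] at hs
      omega
  | @cons_cons l₁ l₂ x h ih =>
      simp only [List.sum_cons] at hs
      have := ih (fun y hy => hpos y (by simp [hy])) (by omega)
      rw [this]

lemma sum_set_succ : ∀ (l : List ℕ) (i : ℕ), ∀ h : i < l.length,
    (l.set i (l[i] + 1)).sum = l.sum + 1
  | [], i, h => by simp at h
  | x :: l, 0, h => by simp; omega
  | x :: l, (i+1), h => by
      simp only [List.set_cons_succ, List.getElem_cons_succ, List.sum_cons]
      have := sum_set_succ l i (by simpa using h)
      omega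

lemma forall2_succ_exists {a b : List ℕ} (h : List.Forall₂ (· ≤ ·) a b)
    (hs : b.sum = a.sum + 1) : ∃ i, ∃ hi : i < a.length, b = a.set i (a[i] + 1) := by
  induction h with
  | nil => simp at hs
  | @cons x y a' b' hxy htl ih =>
      simp only [List.sum_cons] at hs
      by_cases hxy' : x = y
      · subst hxy'
        obtain ⟨i, hi, rfl⟩ := ih (by omega)
        exact ⟨i + 1, by simpa using Nat.succ_lt_succ hi, by simp⟩
      · have h1 := forall2_sum_le htl
        have hy : y = x + 1 := by omega
        have hsum : b'.sum ≤ a'.sum := by omega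
        have := forall2_eq_of_sum htl hsum
        exact ⟨0, by simp, by simp [hy, ← this]⟩

lemma sublist_succ_exists {a b : List ℕ} (h : a <+ b) (hpos : ∀ x ∈ b, 0 < x)
    (hs : b.sum = a.sum + 1) : ∃ i ≤ a.length, b = a.insertIdx i 1 := by
  induction h with
  | slnil => simp at hs
  | @cons l₁ l₂ x h ih =>
      have h1 := sublist_sum_le h
      have hx : 0 < x := hpos x (by simp)
      simp only [List.sum_cons] at hs
      have hx1 : x = 1 := by omega
      have := sublist_eq_of_sum h (fun y hy => hpos y (by simp [hy])) (by omega)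
      exact ⟨0, Nat.zero_le _, by simp [hx1, ← this]⟩
  | @cons_cons l₁ l₂ x h ih =>
      simp only [List.sum_cons] at hs
      obtain ⟨i, hi, rfl⟩ := ih (fun y hy => hpos y (by simp [hy])) (by omega)
      exact ⟨i + 1, by simpa using Nat.succ_le_succ hi, by rw [insertIdx_succ_cons]⟩

end DomAux

open DomAux List in
theorem domSet_succ_card_of_last_eq_one (n : ℕ) (a : List ℕ) (hane : a ≠ [])
    (ha : IsComposition n a) (hsort : a.Pairwise (· ≥ ·))
    (hpen : 2 ≤ a.length → 2 ≤ a[a.length - 2]!)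
    (hlast : a.getLast hane = 1) :
    (domSet (n + 1) a).ncard = 2 * a.length := by
  classical
  obtain ⟨hpos, hsum⟩ := ha
  have hm1 : 1 ≤ a.length := List.length_pos_iff.2 hane
  have hlast' : a[a.length - 1]'(by omega) = 1 := by
    rw [← List.getLast_eq_getElem hane]; exact hlast
  have hge2 : ∀ i, ∀ hi : i + 1 < a.length, 2 ≤ a[i]'(by omega) := by
    intro i hi
    have hm2 : 2 ≤ a.length := by omega
    have hp : 2 ≤ a[a.length - 2]'(by omega) := by
      have := hpen hm2
      rwa [getElem!_pos a (a.length - 2) (by omega)] at this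
    rcases Nat.lt_or_ge i (a.length - 2) with hlt | hge
    · have := (List.pairwise_iff_getElem.1 hsort) i (a.length - 2) (by omega) (by omega) hlt
      exact le_trans hp this
    · have : i = a.length - 2 := by omega
      subst this; exact hp
  -- the two families
  set F : ℕ → List ℕ := fun i => a.set i (a[i]! + 1) with hF
  set G : ℕ → List ℕ := fun i => a.insertIdx i 1 with hG
  have hFval : ∀ i, ∀ hi : i < a.length, F i = a.set i ((a[i]'hi) + 1) := by
    intro i hi
    simp only [hF]
    rw [getElem!_pos a i hi]
  set S : Finset (List ℕ) :=
    ((Finset.range a.length).image F) ∪ ((Finset.range a.length).image G) with hS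
  have hset : domSet (n + 1) a = ↑S := by
    ext b
    constructor
    · rintro ⟨⟨hbpos, hbsum⟩, b', hsub, hfa⟩
      have h1 : a.sum ≤ b'.sum := forall2_sum_le hfa
      have h2 : b'.sum ≤ b.sum := sublist_sum_le hsub
      rcases Nat.lt_or_ge b'.sum (n + 1) with hcase | hcase
      · -- b'.sum = n, so b' = a and b is a with 1 inserted
        have hba : a = b' := forall2_eq_of_sum hfa (by omega)
        subst hba
        obtain ⟨i, hile, rfl⟩ := sublist_succ_exists hsub hbpos (by omega)
        rcases Nat.lt_or_ge i a.length with him | him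
        · simp only [hS, Finset.coe_union, Set.mem_union, Finset.coe_image, Set.mem_image]
          exact Or.inr ⟨i, by simp [Finset.mem_coe, Finset.mem_range, him], rfl⟩
        · have hieq : i = a.length := by omega
          subst hieq
          have key : a.insertIdx a.length 1 = a.insertIdx (a.length - 1) 1 := by
            have hd : a.drop (a.length - 1) = [1] := by
              rw [List.drop_eq_getElem_cons (show a.length - 1 < a.length by omega)]
              have h0 : a.drop (a.length - 1 + 1) = [] :=
                List.drop_eq_nil_of_le (by omega)
              rw [h0, hlast']
            rw [List.insertIdx_length_self,
              insertIdx_eq_take_cons_drop 1 (a.length - 1) a (by omega), hd]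
            conv_lhs => rw [← List.take_append_drop (a.length - 1) a, hd]
            simp
          rw [key]
          simp only [hS, Finset.coe_union, Set.mem_union, Finset.coe_image, Set.mem_image]
          refine Or.inr ⟨a.length - 1, ?_, rfl⟩
          simp only [Finset.mem_coe, Finset.mem_range]
          omega
      · -- b'.sum = n+1 = b.sum, so b' = b and b is a with one entry incremented
        have hbb : b' = b := sublist_eq_of_sum hsub hbpos (by omega)
        subst hbb
        obtain ⟨i, hi, rfl⟩ := forall2_succ_exists hfa (by omega)
        simp only [hS, Finset.coe_union, Set.mem_union, Finset.coe_image, Set.mem_image]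
        refine Or.inl ⟨i, ?_, hFval i hi⟩
        simp only [Finset.mem_coe, Finset.mem_range]
        omega
    · intro hb
      simp only [hS, Finset.coe_union, Set.mem_union, Finset.coe_image, Set.mem_image,
        Finset.mem_coe, Finset.mem_range] at hb
      rcases hb with ⟨i, hi, rfl⟩ | ⟨i, hi, rfl⟩
      · -- F i
        rw [hFval i hi]
        refine ⟨⟨?_, ?_⟩, ?_⟩
        · intro x hx
          rcases List.mem_or_eq_of_mem_set hx with hx' | hx'
          · exact hpos x hx'
          · omega
        · rw [sum_set_succ a i hi, hsum]
        · refine ⟨a.set i ((a[i]'hi) + 1), Sublist.refl _, ?_⟩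
          rw [List.forall₂_iff_get]
          constructor
          · simp
          · intro j h₁ h₂
            simp only [List.get_eq_getElem, List.getElem_set]
            by_cases hij : i = j
            · subst hij; simp
            · rw [if_neg hij]
      · -- G i
        refine ⟨⟨?_, ?_⟩, ?_⟩
        · intro x hx
          rw [List.mem_insertIdx (by omega)] at hx
          rcases hx with rfl | hx'
          · omega
          · exact hpos x hx'
        · rw [sum_insertIdx 1 i a (by omega), hsum]
        · exact ⟨a, sublist_insertIdx 1 i a (by omega),
            List.forall₂_same.2 fun x _ => le_refl x⟩
  rw [hset, Set.ncard_coe_finset, hS]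
  have hFinj : Set.InjOn F ↑(Finset.range a.length) := by
    intro i hi j hj hij
    simp only [Finset.coe_range, Set.mem_Iio] at hi hj
    by_contra hne
    rw [hFval i hi, hFval j hj] at hij
    have hi' : i < (a.set i ((a[i]'hi) + 1)).length := by
      rw [List.length_set]; exact hi
    have hj' : i < (a.set j ((a[j]'hj) + 1)).length := by
      rw [List.length_set]; exact hi
    have heq := congrArg (fun l : List ℕ => l[i]!) hij
    rw [getElem!_pos (a.set i ((a[i]'hi) + 1)) i hi',
      getElem!_pos (a.set j ((a[j]'hj) + 1)) i hj'] at heq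
    rw [List.getElem_set, List.getElem_set, if_pos rfl, if_neg (fun h : j = i => hne h.symm)] at heq
    omega
  have hGinj : Set.InjOn G ↑(Finset.range a.length) := by
    have key : ∀ i j, i < a.length → j < a.length → i < j → G i ≠ G j := by
      intro i j hi hj hlt hij
      have li : i < (G i).length := by
        simp only [hG]; rw [length_insertIdx, if_pos (by omega)]; omega
      have lj : i < (G j).length := by
        simp only [hG]; rw [length_insertIdx, if_pos (by omega)]; omega
      have hi1 : (G i)[i]'li = 1 := List.getElem_insertIdx_self li
      have hj1 : (G j)[i]'lj = a[i]'(by omega) :=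
        List.getElem_insertIdx_of_lt hlt lj
      have heq := congrArg (fun l : List ℕ => l[i]!) hij
      rw [getElem!_pos (G i) i li, getElem!_pos (G j) i lj, hi1, hj1] at heq
      have := hge2 i (by omega)
      omega
    intro i hi j hj hij
    simp only [Finset.coe_range, Set.mem_Iio] at hi hj
    rcases Nat.lt_trichotomy i j with h | h | h
    · exact absurd hij (key i j hi hj h)
    · exact h
    · exact absurd hij.symm (key j i hj hi h)
  have hdisj : Disjoint ((Finset.range a.length).image F) ((Finset.range a.length).image G) := by
    rw [Finset.disjoint_left]
    rintro x hx hx'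
    simp only [Finset.mem_image, Finset.mem_range] at hx hx'
    obtain ⟨i, hi, rfl⟩ := hx
    obtain ⟨j, hj, hji⟩ := hx'
    have l1 : (F i).length = a.length := by simp [hF]
    have l2 : (G j).length = a.length + 1 := by
      simp only [hG]; rw [length_insertIdx, if_pos (by omega)]
    rw [← hji] at l1
    omega
  rw [Finset.card_union_of_disjoint hdisj, Finset.card_image_of_injOn hFinj,
    Finset.card_image_of_injOn hGinj, Finset.card_range]
  omega
end

section
/- If a and b are dominating equivalent compositions of n, each weakly decreasing with second-to-last term at least 2 (when it exists), then a and b have the same number of parts. -/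
namespace DomAux
open List

lemma sublist_eq_of_sum_le {b' b : List ℕ} (h : b'.Sublist b) :
    (∀ x ∈ b, 0 < x) → b.sum ≤ b'.sum → b' = b := by
  induction h with
  | slnil => intro _ _; rfl
  | @cons l₁ l₂ x h ih =>
    intro hpos hs
    exfalso
    have h1 : l₁.sum ≤ l₂.sum := h.sum_le_sum (by simp)
    have hx : 0 < x := hpos x (by simp)
    simp only [sum_cons] at hs
    omega
  | @cons_cons l₁ l₂ x h ih =>
    intro hpos hs
    simp only [sum_cons] at hs
    have := ih (fun y hy => hpos y (by simp [hy])) (by omega)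
    simp [this]

lemma forall₂_eq_of_sum_le {a b' : List ℕ} (h : List.Forall₂ (· ≤ ·) a b') :
    b'.sum ≤ a.sum → a = b' := by
  induction h with
  | nil => intro _; rfl
  | @cons x y as bs hxy h ih =>
    intro hs
    simp only [sum_cons] at hs
    have h1 : as.sum ≤ bs.sum := h.sum_le_sum
    have hxe : x = y := by omega
    have := ih (by omega)
    simp [hxe, this]

lemma exists_set_of_forall₂ {a b : List ℕ} (h : List.Forall₂ (· ≤ ·) a b) :
    b.sum = a.sum + 1 → ∃ i, ∃ hi : i < a.length, b = a.set i (a[i] + 1) := by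
  induction h with
  | nil => intro hs; simp at hs
  | @cons x y as bs hxy h ih =>
    intro hs
    simp only [sum_cons] at hs
    have h1 : as.sum ≤ bs.sum := h.sum_le_sum
    rcases Nat.lt_or_ge x y with hlt | hge
    · have hy : y = x + 1 := by omega
      have heq : as = bs := forall₂_eq_of_sum_le h (by omega)
      exact ⟨0, by simp, by simp [hy, heq]⟩
    · have hxe : x = y := le_antisymm hxy hge
      obtain ⟨i, hi, hbs⟩ := ih (by omega)
      exact ⟨i + 1, by simpa using Nat.succ_lt_succ hi, by simp [hbs, hxe]⟩

lemma exists_insert_of_sublist {a b : List ℕ} (h : a.Sublist b) :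
    (∀ x ∈ b, 0 < x) → b.sum = a.sum + 1 →
    ∃ j, j ≤ a.length ∧ b = a.take j ++ 1 :: a.drop j := by
  induction h with
  | slnil => intro _ hs; simp at hs
  | @cons l₁ l₂ x h ih =>
    intro hpos hs
    have h1 : l₁.sum ≤ l₂.sum := h.sum_le_sum (by simp)
    have hx : 0 < x := hpos x (by simp)
    simp only [sum_cons] at hs
    have hx1 : x = 1 := by omega
    have heq : l₁ = l₂ := sublist_eq_of_sum_le h (fun y hy => hpos y (by simp [hy])) (by omega)
    exact ⟨0, Nat.zero_le _, by simp [hx1, heq]⟩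
  | @cons_cons l₁ l₂ x h ih =>
    intro hpos hs
    simp only [sum_cons] at hs
    obtain ⟨j, hj, hb⟩ := ih (fun y hy => hpos y (by simp [hy])) (by omega)
    exact ⟨j + 1, by simpa using hj, by simp [hb]⟩

lemma sum_set_succ_s12 (a : List ℕ) (i : ℕ) (hi : i < a.length) :
    (a.set i (a[i] + 1)).sum = a.sum + 1 := by
  rw [List.sum_set]
  have h1 := List.sum_take_add_sum_drop a i
  rw [List.drop_eq_getElem_cons hi] at h1
  simp only [sum_cons] at h1
  simp only [hi, if_pos]
  omega

lemma sum_insert_one (a : List ℕ) (j : ℕ) :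
    (a.take j ++ 1 :: a.drop j).sum = a.sum + 1 := by
  have h1 := List.sum_take_add_sum_drop a j
  simp only [sum_append, sum_cons]
  omega

/-- The compositions of `a.sum + 1` dominating `a` are exactly: `a` with one part
incremented, or `a` with an extra part `1` inserted. -/
lemma domSet_succ_eq (a : List ℕ) (hpos : ∀ x ∈ a, 0 < x) :
    domSet (a.sum + 1) a =
      ↑(((Finset.range a.length).image (fun i => a.set i (a[i]! + 1))) ∪
        ((Finset.range (a.length + 1)).image (fun j => a.take j ++ 1 :: a.drop j))) := by
  ext b
  simp only [Finset.coe_union, Set.mem_union, Finset.coe_image, Set.mem_image,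
    Finset.mem_coe, Finset.mem_range, domSet, Set.mem_setOf_eq]
  constructor
  · rintro ⟨⟨hbpos, hbsum⟩, b', hsub, hf⟩
    have h1 : a.sum ≤ b'.sum := hf.sum_le_sum
    have h2 : b'.sum ≤ b.sum := hsub.sum_le_sum (by simp)
    rcases Nat.lt_or_ge b'.sum (a.sum + 1) with hc | hc
    · -- b'.sum = a.sum : b' = a, then b is a with a 1 inserted
      have hab' : a = b' := forall₂_eq_of_sum_le hf (by omega)
      subst hab'
      obtain ⟨j, hj, hb⟩ := exists_insert_of_sublist hsub hbpos (by omega)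
      exact Or.inr ⟨j, by omega, hb.symm⟩
    · -- b'.sum = b.sum : b' = b, pointwise increment
      have hb'b : b' = b := sublist_eq_of_sum_le hsub hbpos (by omega)
      subst hb'b
      obtain ⟨i, hi, hb⟩ := exists_set_of_forall₂ hf (by omega)
      refine Or.inl ⟨i, hi, ?_⟩
      rw [getElem!_pos a i hi]
      exact hb.symm
  · rintro (⟨i, hi, rfl⟩ | ⟨j, hj, rfl⟩)
    · rw [getElem!_pos a i hi]
      refine ⟨⟨?_, by rw [sum_set_succ_s12 a i hi]⟩, a.set i (a[i] + 1), Sublist.refl _, ?_⟩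
      · intro x hx
        rcases List.mem_or_eq_of_mem_set hx with h | h
        · exact hpos x h
        · omega
      · rw [List.forall₂_iff_get]
        refine ⟨by simp, ?_⟩
        intro k h₁ h₂
        simp only [List.get_eq_getElem]
        rw [List.getElem_set]
        split
        · next h => subst h; omega
        · omega
    · have hsub : a.Sublist (a.take j ++ 1 :: a.drop j) := by
        have h := (List.sublist_cons_self 1 (a.drop j)).append_left (a.take j)
        simpa using h
      refine ⟨⟨?_, by rw [sum_insert_one]⟩, a, hsub, List.forall₂_same.2 (fun x _ => le_refl x)⟩
      intro x hx
      rcases List.mem_append.1 hx with h | h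
      · exact hpos x (List.mem_of_mem_take h)
      · rcases List.mem_cons.1 h with h | h
        · omega
        · exact hpos x (List.mem_of_mem_drop h)

lemma lenB (a : List ℕ) {j : ℕ} (hj : j ≤ a.length) :
    (a.take j ++ 1 :: a.drop j).length = a.length + 1 := by
  simp; omega

lemma B_self {a : List ℕ} {j : ℕ} (hj : j ≤ a.length) :
    (a.take j ++ 1 :: a.drop j)[j]'(by rw [lenB a hj]; omega) = 1 := by
  rw [List.getElem_append]
  have hlt : ¬ j < (a.take j).length := by simp
  rw [dif_neg hlt]
  simp [Nat.min_eq_left hj]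

lemma B_lt {a : List ℕ} {j j' : ℕ} (hlt : j < j') (hj' : j' ≤ a.length) :
    (a.take j' ++ 1 :: a.drop j')[j]'(by rw [lenB a hj']; omega) = a[j]'(by omega) := by
  rw [List.getElem_append]
  have h : j < (a.take j').length := by simp; omega
  rw [dif_pos h]
  exact List.getElem_take

lemma B_ne {a : List ℕ} {j j' : ℕ} (hlt : j < j') (hj' : j' ≤ a.length)
    (h2 : 2 ≤ a[j]'(by omega)) :
    a.take j ++ 1 :: a.drop j ≠ a.take j' ++ 1 :: a.drop j' := by
  intro heq
  have h1 := List.getElem_of_eq heq (i := j) (by rw [lenB a (by omega)]; omega)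
  rw [B_self (by omega), B_lt hlt hj'] at h1
  omega

lemma domSet_succ_ncard (a : List ℕ) (hne : a ≠ []) (hpos : ∀ x ∈ a, 0 < x)
    (hsa : a.Pairwise (· ≥ ·)) (hpa : 2 ≤ a.length → 2 ≤ a[a.length - 2]!) :
    ∃ k, k ≤ 1 ∧ (domSet (a.sum + 1) a).ncard = 2 * a.length + 1 - k := by
  have hm : 1 ≤ a.length := List.length_pos_iff.2 hne
  -- all parts except possibly the last are ≥ 2
  have key2 : ∀ i (h : i + 1 < a.length), 2 ≤ a[i]'(by omega) := by
    intro i h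
    have h2 : 2 ≤ a.length := by omega
    have hpa' : 2 ≤ a[a.length - 2]'(by omega) := by
      rw [← getElem!_pos a (a.length - 2) (by omega)]; exact hpa h2
    rcases Nat.lt_or_ge i (a.length - 2) with hi | hi
    · have := List.pairwise_iff_getElem.1 hsa i (a.length - 2) (by omega) (by omega) hi
      omega
    · have : i = a.length - 2 := by omega
      subst this; exact hpa'
  set FA : Finset (List ℕ) :=
    (Finset.range a.length).image (fun i => a.set i (a[i]! + 1)) with hFA
  set FB : Finset (List ℕ) :=
    (Finset.range (a.length + 1)).image (fun j => a.take j ++ 1 :: a.drop j) with hFB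
  have hdisj : Disjoint FA FB := by
    rw [Finset.disjoint_left]
    intro x hx hx'
    obtain ⟨i, hi, rfl⟩ := Finset.mem_image.1 hx
    obtain ⟨j, hj, hbe⟩ := Finset.mem_image.1 hx'
    rw [Finset.mem_range] at hi hj
    have := congrArg List.length hbe
    simp at this
    omega
  have hcardA : FA.card = a.length := by
    rw [hFA, Finset.card_image_of_injOn, Finset.card_range]
    intro i hi j hj heq
    rw [Finset.mem_coe, Finset.mem_range] at hi hj
    by_contra hij
    have h1 := List.getElem_of_eq heq (i := i) (by simpa using hi)
    rw [List.getElem_set_self, List.getElem_set_ne (by omega)] at h1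
    have h2 := getElem!_pos a i hi
    omega
  rw [domSet_succ_eq a hpos, Set.ncard_coe_finset, ← hFA, ← hFB,
    Finset.card_union_of_disjoint hdisj, hcardA]
  by_cases hlast : a[a.length - 1]'(by omega) = 1
  · -- last part is 1 : inserting before or after it coincide
    refine ⟨1, le_refl 1, ?_⟩
    have hd : a.drop (a.length - 1) = [1] := by
      rw [List.drop_eq_getElem_cons (by omega), hlast]
      have : a.length - 1 + 1 = a.length := by omega
      rw [this, List.drop_length]
    have hBm : a.take a.length ++ 1 :: a.drop a.length
        = a.take (a.length - 1) ++ 1 :: a.drop (a.length - 1) := by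
      rw [hd, List.take_length, List.drop_length]
      conv_lhs => rw [← a.take_append_drop (a.length - 1), hd]
      simp
    have hFBeq : FB = (Finset.range a.length).image
        (fun j => a.take j ++ 1 :: a.drop j) := by
      apply Finset.Subset.antisymm
      · intro x hx
        obtain ⟨j, hj, rfl⟩ := Finset.mem_image.1 hx
        rw [Finset.mem_range] at hj
        rcases Nat.lt_or_ge j a.length with h | h
        · exact Finset.mem_image.2 ⟨j, Finset.mem_range.2 h, rfl⟩
        · have hje : j = a.length := by omega
          subst hje
          exact Finset.mem_image.2 ⟨a.length - 1, Finset.mem_range.2 (by omega), hBm.symm⟩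
      · exact Finset.image_subset_image (Finset.range_subset_range.2 (by omega))
    rw [hFBeq, Finset.card_image_of_injOn, Finset.card_range]
    · omega
    · intro i hi j hj heq
      rw [Finset.mem_coe, Finset.mem_range] at hi hj
      by_contra hij
      rcases Nat.lt_or_ge i j with h | h
      · exact B_ne h (by omega) (key2 i (by omega)) heq
      · exact B_ne (by omega : j < i) (by omega) (key2 j (by omega)) heq.symm
  · -- last part ≥ 2 : all insertions distinct
    refine ⟨0, by omega, ?_⟩
    have hlast2 : 2 ≤ a[a.length - 1]'(by omega) := by
      have := hpos (a[a.length - 1]'(by omega)) (List.getElem_mem _)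
      omega
    have hall : ∀ i (h : i < a.length), 2 ≤ a[i]'h := by
      intro i h
      rcases Nat.lt_or_ge (i + 1) a.length with h' | h'
      · exact key2 i h'
      · have : i = a.length - 1 := by omega
        subst this; exact hlast2
    rw [hFB, Finset.card_image_of_injOn, Finset.card_range]
    · omega
    · intro i hi j hj heq
      rw [Finset.mem_coe, Finset.mem_range] at hi hj
      by_contra hij
      rcases Nat.lt_or_ge i j with h | h
      · exact B_ne h (by omega) (hall i (by omega)) heq
      · exact B_ne (by omega : j < i) (by omega) (hall j (by omega)) heq.symm

end DomAux

theorem domEquiv_length_eq (n : ℕ) (a b : List ℕ) (hane : a ≠ []) (hbne : b ≠ [])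
    (ha : IsComposition n a) (hb : IsComposition n b)
    (hsa : a.Pairwise (· ≥ ·)) (hsb : b.Pairwise (· ≥ ·))
    (hpa : 2 ≤ a.length → 2 ≤ a[a.length - 2]!)
    (hpb : 2 ≤ b.length → 2 ≤ b[b.length - 2]!)
    (heq : ∀ N : ℕ, 0 < N → (domSet N a).ncard = (domSet N b).ncard) :
    a.length = b.length := by
  obtain ⟨hapos, hasum⟩ := ha
  obtain ⟨hbpos, hbsum⟩ := hb
  obtain ⟨ka, hka, hca⟩ := DomAux.domSet_succ_ncard a hane hapos hsa hpa
  obtain ⟨kb, hkb, hcb⟩ := DomAux.domSet_succ_ncard b hbne hbpos hsb hpb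
  rw [hasum] at hca
  rw [hbsum] at hcb
  have h := heq (n + 1) (by omega)
  rw [hca, hcb] at h
  have hla : 1 ≤ a.length := List.length_pos_iff.2 hane
  have hlb : 1 ≤ b.length := List.length_pos_iff.2 hbne
  omega
end

section
/- Let b = (b_1,...,b_m) be a composition of n all of whose terms are strictly greater than a positive integer t. Then every composition of n + t that dominates b contains a unique occurrence of b (unique subsequence witnessing domination). -/
theorem unique_occurrence (n t : ℕ) (ht : 0 < t) (b : List ℕ)
    (hb : IsComposition n b) (hbt : ∀ x ∈ b, t < x)
    (b' : List ℕ) (hb' : IsComposition (n + t) b') (hdom : Dominates b' b) :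
    ∃! f : Fin b.length → Fin b'.length,
      StrictMono f ∧ ∀ j : Fin b.length, b.get j ≤ b'.get (f j) := by
  obtain ⟨hbpos, hbsum⟩ := hb
  obtain ⟨hb'pos, hb'sum⟩ := hb'
  -- Existence
  obtain ⟨c, hsub, hf2⟩ := hdom
  have hlen : b.length = c.length := hf2.length_eq
  obtain ⟨e, he⟩ := List.sublist_iff_exists_fin_orderEmbedding_get_eq.mp hsub
  have hget : ∀ j : Fin b.length, b.get j ≤ b'.get (e (Fin.cast hlen j)) := by
    intro j
    rw [← he]
    have := (List.forall₂_iff_get.mp hf2).2 j j.isLt (hlen ▸ j.isLt)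
    simpa using this
  have hmono : StrictMono (fun j : Fin b.length => e (Fin.cast hlen j)) := by
    intro i j hij
    exact e.strictMono (by simpa using hij)
  -- Key bound: for any occurrence f, sum over complement of image ≤ t
  have key : ∀ f : Fin b.length → Fin b'.length, StrictMono f →
      (∀ j, b.get j ≤ b'.get (f j)) →
      ∑ i ∈ (Finset.univ.image f)ᶜ, b'.get i ≤ t := by
    intro f hf hfle
    have h1 : ∑ i ∈ Finset.univ.image f, b'.get i = ∑ j, b'.get (f j) :=
      Finset.sum_image (fun x _ y _ h => hf.injective h)
    have h2 : n ≤ ∑ i ∈ Finset.univ.image f, b'.get i := by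
      rw [h1, ← hbsum, ← Fin.sum_univ_getElem b]
      exact Finset.sum_le_sum fun j _ => hfle j
    have h3 : ∑ i ∈ (Finset.univ.image f)ᶜ, b'.get i
        + ∑ i ∈ Finset.univ.image f, b'.get i = n + t := by
      rw [Finset.sum_compl_add_sum]
      simp only [List.get_eq_getElem]
      rw [Fin.sum_univ_getElem, hb'sum]
    omega
  -- Uniqueness
  refine ⟨_, ⟨hmono, hget⟩, ?_⟩
  rintro g ⟨hg, hgle⟩
  have himage : ∀ (f₁ f₂ : Fin b.length → Fin b'.length), StrictMono f₁ →
      (∀ j, b.get j ≤ b'.get (f₁ j)) → StrictMono f₂ →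
      (∀ j, b.get j ≤ b'.get (f₂ j)) →
      Finset.univ.image f₁ ⊆ Finset.univ.image f₂ := by
    intro f₁ f₂ h₁ h₁le h₂ h₂le i hi
    by_contra hni
    obtain ⟨j, -, rfl⟩ := Finset.mem_image.mp hi
    have hgt : t < b'.get (f₁ j) :=
      lt_of_lt_of_le (hbt _ (List.get_mem b j)) (h₁le j)
    have hle : b'.get (f₁ j) ≤ ∑ i ∈ (Finset.univ.image f₂)ᶜ, b'.get i :=
      Finset.single_le_sum (fun _ _ => Nat.zero_le _) (Finset.mem_compl.mpr hni)
    have := key f₂ h₂ h₂le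
    omega
  have hset : Finset.univ.image g = Finset.univ.image (fun j => e (Fin.cast hlen j)) :=
    le_antisymm (himage _ _ hg hgle hmono hget) (himage _ _ hmono hget hg hgle)
  have hcard : (Finset.univ.image g).card = b.length := by
    rw [Finset.card_image_of_injective _ hg.injective, Finset.card_univ, Fintype.card_fin]
  have e1 : g = (Finset.univ.image g).orderEmbOfFin hcard :=
    Finset.orderEmbOfFin_unique hcard (fun x => Finset.mem_image_of_mem g (Finset.mem_univ x)) hg
  have e2 : (fun j : Fin b.length => e (Fin.cast hlen j))
      = (Finset.univ.image g).orderEmbOfFin hcard :=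
    Finset.orderEmbOfFin_unique hcard
      (fun x => hset ▸ Finset.mem_image_of_mem _ (Finset.mem_univ x)) hmono
  rw [e1, e2]
end

section
/- Let a and b be compositions of n, each with m parts, each weakly decreasing, with all but possibly the last part at least 2, and suppose the last part of a is strictly smaller than the last part of b. Then |D_{n+a_m}(a)| < |D_{n+a_m}(b)|, where a_m is the last part of a. In particular, a and b are not dominating equivalent. -/
def tr (k : ℕ) : List ℕ → List ℕ → List ℕ → List ℕ
  | [], _, _ => []
  | c :: cs, b₀ :: bt, a₀ :: at' =>
      if k < c then (a₀ + (c - b₀)) :: tr k cs bt at'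
      else c :: tr k cs (b₀ :: bt) (a₀ :: at')
  | c :: cs, _, _ => c :: cs

lemma tr_nil_left (k : ℕ) (c a : List ℕ) : tr k c [] a = c := by
  cases c <;> simp [tr]

lemma sfa_sum_le {b c : List ℕ} (h : List.SublistForall₂ (· ≤ ·) b c) : b.sum ≤ c.sum := by
  induction h with
  | nil => simp
  | cons h1 _ ih => simp only [List.sum_cons]; omega
  | cons_right _ ih => simp only [List.sum_cons]; omega

/-- Surjectivity: every `d` dominating `a` with small excess is `tr k c b a`
for some suitable `c` dominating `b`. -/
lemma tr_surj (k : ℕ) {a d : List ℕ} (h : List.SublistForall₂ (· ≤ ·) a d) :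
    ∀ b : List ℕ, List.Forall₂ (fun _ y => k < y) a b →
    d.sum ≤ a.sum + k → (∀ x ∈ d, 0 < x) →
    ∃ c : List ℕ, List.SublistForall₂ (· ≤ ·) b c ∧ c.sum + a.sum = d.sum + b.sum ∧
      (∀ x ∈ c, 0 < x) ∧ tr k c b a = d := by
  induction h with
  | @nil l =>
    intro b hab _ hpos
    cases hab
    exact ⟨l, List.SublistForall₂.nil, by simp, hpos, tr_nil_left k l []⟩
  | @cons a₀ d₀ a' d' h1 h2 ih =>
    intro b hab hsum hpos
    cases hab with
    | cons hb₀ hab' =>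
      rename_i b₀ b'
      obtain ⟨c', hc1, hc2, hc3, hc4⟩ := ih b' hab'
        (by simp only [List.sum_cons] at hsum; omega)
        (fun x hx => hpos x (List.mem_cons_of_mem _ hx))
      have hkb : k < b₀ + (d₀ - a₀) := lt_of_lt_of_le hb₀ (Nat.le_add_right _ _)
      refine ⟨(b₀ + (d₀ - a₀)) :: c', List.SublistForall₂.cons (Nat.le_add_right _ _) hc1,
        ?_, ?_, ?_⟩
      · simp only [List.sum_cons]; omega
      · intro x hx
        rcases List.mem_cons.1 hx with rfl | hx
        · omega
        · exact hc3 x hx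
      · simp only [tr, if_pos hkb, hc4]
        congr 1
        omega
  | @cons_right d₀ a d' h ih =>
    intro b hab hsum hpos
    have hasum : a.sum ≤ d'.sum := sfa_sum_le h
    have hd₀ : d₀ ≤ k := by simp only [List.sum_cons] at hsum; omega
    obtain ⟨c', hc1, hc2, hc3, hc4⟩ := ih b hab
      (by simp only [List.sum_cons] at hsum; omega)
      (fun x hx => hpos x (List.mem_cons_of_mem _ hx))
    refine ⟨d₀ :: c', List.SublistForall₂.cons_right hc1, by simp only [List.sum_cons]; omega,
      ?_, ?_⟩
    · intro x hx
      rcases List.mem_cons.1 hx with rfl | hx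
      · exact hpos x (List.mem_cons_self)
      · exact hc3 x hx
    · cases hab with
      | nil =>
        rw [tr_nil_left] at hc4 ⊢
        rw [hc4]
      | cons hb₀ hab' =>
        show tr k (d₀ :: c') _ _ = _
        simp only [tr]
        rw [if_neg (show ¬ k < d₀ by omega), hc4]

/-- `tr` acts as identity-transport on an exactly-matching big prefix. -/
lemma tr_prefix (k : ℕ) : ∀ (p q : List ℕ), p.length = q.length → (∀ x ∈ p, k < x) →
    ∀ r s t : List ℕ, tr k (p ++ r) (p ++ s) (q ++ t) = q ++ tr k r s t := by
  intro p
  induction p with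
  | nil => intro q hq _ r s t; rw [List.length_nil] at hq
           rw [List.eq_nil_of_length_eq_zero hq.symm]; simp
  | cons p₀ p' ih =>
    intro q hq hbig r s t
    cases q with
    | nil => simp at hq
    | cons q₀ q' =>
      simp only [List.cons_append, tr, if_pos (hbig p₀ (List.mem_cons_self)),
        List.append_eq]
      rw [ih q' (by simpa using hq) (fun x hx => hbig x (List.mem_cons_of_mem _ hx)) r s t]
      simp

lemma length_le_sum_of_pos : ∀ {l : List ℕ}, (∀ x ∈ l, 0 < x) → l.length ≤ l.sum := by
  intro l
  induction l with
  | nil => simp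
  | cons x l ih =>
    intro h
    have h1 : 0 < x := h x (List.mem_cons_self)
    have h2 := ih (fun y hy => h y (List.mem_cons_of_mem _ hy))
    simp only [List.length_cons, List.sum_cons]
    omega

lemma domSet_finite_s14 (N : ℕ) (x : List ℕ) : (domSet N x).Finite := by
  have h1 : {l : List (Fin (N + 1)) | l.length ≤ N}.Finite := List.finite_length_le _ N
  apply Set.Finite.subset (h1.image (List.map Fin.val))
  rintro l ⟨⟨hpos, hsum⟩, -⟩
  have hmem : ∀ y ∈ l, y < N + 1 := by
    intro y hy
    have := List.single_le_sum (fun z (_ : z ∈ l) => Nat.zero_le z) y hy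
    omega
  refine ⟨l.attach.map (fun y => (⟨y.1, hmem y.1 y.2⟩ : Fin (N + 1))), ?_, ?_⟩
  · simp only [Set.mem_setOf_eq, List.length_map, List.length_attach]
    exact hsum ▸ length_le_sum_of_pos hpos
  · simp [List.map_map, Function.comp]

lemma sorted_getLast_le : ∀ {l : List ℕ}, l.Pairwise (· ≥ ·) → ∀ (hne : l ≠ []),
    ∀ x ∈ l, l.getLast hne ≤ x := by
  intro l
  induction l with
  | nil => intro _ hne; simp at hne
  | cons y t ih =>
    intro h hne x hx
    cases t with
    | nil =>
      simp only [List.mem_singleton] at hx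
      simp [hx]
    | cons z t' =>
      rw [List.getLast_cons (List.cons_ne_nil _ _)]
      rcases List.mem_cons.1 hx with rfl | hx'
      · exact (List.pairwise_cons.1 h).1 _ (List.getLast_mem _)
      · exact ih h.of_cons _ x hx'

lemma forall₂_of_length_eq {P : ℕ → Prop} : ∀ {a b : List ℕ}, a.length = b.length →
    (∀ y ∈ b, P y) → List.Forall₂ (fun _ y => P y) a b := by
  intro a
  induction a with
  | nil =>
    intro b h _
    cases b
    · exact List.Forall₂.nil
    · simp at h
  | cons x t ih =>
    intro b h hP
    cases b with
    | nil => simp at h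
    | cons y s =>
      exact List.Forall₂.cons (hP y (List.mem_cons_self))
        (ih (by simpa using h) fun z hz => hP z (List.mem_cons_of_mem _ hz))

theorem domSet_card_lt_of_last_lt (n m : ℕ) (a b : List ℕ)
    (hane : a ≠ []) (hbne : b ≠ [])
    (ha : IsComposition n a) (hb : IsComposition n b)
    (hal : a.length = m) (hbl : b.length = m)
    (hsa : a.Pairwise (· ≥ ·)) (hsb : b.Pairwise (· ≥ ·))
    (hpa : ∀ i : ℕ, i + 1 < a.length → 2 ≤ a[i]!)
    (hpb : ∀ i : ℕ, i + 1 < b.length → 2 ≤ b[i]!)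
    (hlt : a.getLast hane < b.getLast hbne) :
    (domSet (n + a.getLast hane) a).ncard < (domSet (n + a.getLast hane) b).ncard ∧
      ¬ (∀ N : ℕ, 0 < N → (domSet N a).ncard = (domSet N b).ncard) := by
  classical
  set k := a.getLast hane with hkdef
  set bl := b.getLast hbne with hbldef
  set N := n + k with hNdef
  have hasum : a.sum = n := ha.2
  have hbsum : b.sum = n := hb.2
  have hk0 : 0 < k := ha.1 _ (List.getLast_mem hane)
  have hbl0 : 0 < bl := hb.1 _ (List.getLast_mem hbne)
  have hbk : ∀ x ∈ b, k < x := fun x hx =>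
    lt_of_lt_of_le hlt (sorted_getLast_le hsb hbne x hx)
  have hlen : a.length = b.length := by rw [hal, hbl]
  have hab : List.Forall₂ (fun _ y => k < y) a b := forall₂_of_length_eq hlen hbk
  have hbdecomp : b.dropLast ++ [bl] = b := List.dropLast_append_getLast hbne
  have hadecomp : a.dropLast ++ [k] = a := List.dropLast_append_getLast hane
  set c1 : List ℕ := b.dropLast ++ [k, bl] with hc1def
  set c2 : List ℕ := b ++ [k] with hc2def
  -- basic membership facts
  have hfb2 : List.Forall₂ (· ≤ ·) b b := List.forall₂_same.2 fun x _ => le_refl x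
  have hc2S : c2 ∈ domSet N b := by
    refine ⟨⟨?_, by simp [hc2def, hbsum, hNdef]⟩, ⟨b, List.sublist_append_left b [k], hfb2⟩⟩
    intro x hx
    rcases List.mem_append.1 hx with hx | hx
    · exact hb.1 x hx
    · simp at hx; omega
  have hc1sum : c1.sum = N := by
    have : b.dropLast.sum + bl = n := by
      have := congrArg List.sum hbdecomp
      simp at this; omega
    simp [hc1def]; omega
  have hc1S : c1 ∈ domSet N b := by
    refine ⟨⟨?_, hc1sum⟩, ⟨b, ?_, hfb2⟩⟩
    · intro x hx
      rcases List.mem_append.1 hx with hx | hx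
      · exact hb.1 x (List.mem_of_mem_dropLast hx)
      · simp at hx; rcases hx with rfl | rfl <;> omega
    · have hs : List.Sublist (b.dropLast ++ [bl]) (b.dropLast ++ [k, bl]) :=
        (List.sublist_cons_self k [bl]).append_left b.dropLast
      rw [hbdecomp] at hs
      exact hs
  have hne12 : c1 ≠ c2 := by
    intro h
    have e1 : c1.getLast? = some bl := by
      rw [show c1 = (b.dropLast ++ [k]) ++ [bl] by simp [hc1def]]
      exact List.getLast?_concat
    have e2 : c2.getLast? = some k := List.getLast?_concat
    rw [h, e2] at e1
    simp at e1
    omega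
  -- the two images agree
  have hg2 : tr k c2 b a = a ++ [k] := by
    have h := tr_prefix k b a hlen.symm hbk [k] [] []
    simpa [tr] using h
  have hg1 : tr k c1 b a = a.dropLast ++ [k, k] := by
    have hlen' : b.dropLast.length = a.dropLast.length := by
      simp [List.length_dropLast, hal, hbl]
    have hbig' : ∀ x ∈ b.dropLast, k < x := fun x hx => hbk x (List.mem_of_mem_dropLast hx)
    have h := tr_prefix k b.dropLast a.dropLast hlen' hbig' [k, bl] [bl] [k]
    rw [hbdecomp, hadecomp] at h
    rw [hc1def, h]
    have : tr k [k, bl] [bl] [k] = [k, k] := by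
      simp [tr, hlt, Nat.sub_self, lt_irrefl]
    rw [this]
  have eq12 : tr k c1 b a = tr k c2 b a := by
    rw [hg1, hg2, ← hadecomp]
    simp
  -- inclusion
  have hsub : domSet N a ⊆ (fun c => tr k c b a) '' (domSet N b \ {c2}) := by
    rintro d ⟨⟨hdpos, hdsum⟩, a', ha'sub, ha'le⟩
    have hsfa : List.SublistForall₂ (· ≤ ·) a d :=
      List.sublistForall₂_iff.2 ⟨a', ha'le, ha'sub⟩
    obtain ⟨c, hcd, hcsum, hcpos, hctr⟩ := tr_surj k hsfa b hab (by omega) hdpos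
    have hcS : c ∈ domSet N b := by
      refine ⟨⟨hcpos, by omega⟩, ?_⟩
      obtain ⟨l, hl1, hl2⟩ := List.sublistForall₂_iff.1 hcd
      exact ⟨l, hl2, hl1⟩
    by_cases hcc : c = c2
    · exact ⟨c1, ⟨hc1S, by simp [hne12]⟩, by show tr k c1 b a = d; rw [eq12, ← hcc]; exact hctr⟩
    · exact ⟨c, ⟨hcS, by simp [hcc]⟩, hctr⟩
  -- cardinalities
  have hfinb := domSet_finite_s14 N b
  have hfindiff : (domSet N b \ {c2}).Finite := hfinb.subset Set.diff_subset
  have h1 : (domSet N a).ncard ≤ ((fun c => tr k c b a) '' (domSet N b \ {c2})).ncard :=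
    Set.ncard_le_ncard hsub (hfindiff.image _)
  have h2 : ((fun c => tr k c b a) '' (domSet N b \ {c2})).ncard ≤ (domSet N b \ {c2}).ncard :=
    Set.ncard_image_le hfindiff
  have h3 : (domSet N b \ {c2}).ncard < (domSet N b).ncard :=
    Set.ncard_diff_singleton_lt_of_mem hc2S hfinb
  have main : (domSet N a).ncard < (domSet N b).ncard := by omega
  refine ⟨main, fun h => ?_⟩
  have := h N (by omega)
  omega
end

section
/- Two compositions are dominating equivalent if and only if they correspond to the same 2-free integer partition, where the 2-free partition of a composition is obtained by sorting its parts in weakly decreasing order and replacing each part equal to 2 by two parts equal to 1. -/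
instance (b a : List ℕ) : Decidable (Dominates b a) :=
  decidable_of_iff (∃ b' ∈ b.sublists, List.Forall₂ (· ≤ ·) a b') <| by
    simp only [Dominates, List.mem_sublists, exists_prop]

/-- all compositions of `N` as a finset of lists -/
noncomputable def allComps (N : ℕ) : Finset (List ℕ) :=
  (Finset.univ : Finset (Composition N)).image Composition.blocks

lemma mem_allComps {N : ℕ} {b : List ℕ} : b ∈ allComps N ↔ IsComposition N b := by
  constructor
  · rintro hb
    simp only [allComps, Finset.mem_image] at hb
    obtain ⟨cp, -, rfl⟩ := hb
    exact ⟨fun x hx => cp.blocks_pos hx, cp.blocks_sum⟩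
  · rintro ⟨h1, h2⟩
    simp only [allComps, Finset.mem_image]
    exact ⟨⟨b, h1 _, h2⟩, Finset.mem_univ _, rfl⟩

noncomputable def dF (N : ℕ) (a : List ℕ) : Finset (List ℕ) :=
  (allComps N).filter (fun b => Dominates b a)

lemma mem_dF {N : ℕ} {a b : List ℕ} : b ∈ dF N a ↔ IsComposition N b ∧ Dominates b a := by
  simp [dF, Finset.mem_filter, mem_allComps]

noncomputable def cnt (N : ℕ) (a : List ℕ) : ℕ := (dF N a).card

lemma domSet_eq (N : ℕ) (a : List ℕ) : domSet N a = ↑(dF N a) := by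
  ext b; simp [domSet, mem_dF]

lemma ncard_domSet (N : ℕ) (a : List ℕ) : (domSet N a).ncard = cnt N a := by
  rw [domSet_eq, Set.ncard_coe_finset]; rfl

lemma dominates_nil (b : List ℕ) : Dominates b [] :=
  ⟨[], List.nil_sublist b, List.Forall₂.nil⟩

lemma nil_dominates {a : List ℕ} : Dominates [] a ↔ a = [] := by
  constructor
  · rintro ⟨b', hs, hf⟩
    rw [List.sublist_nil] at hs; subst hs
    cases hf; rfl
  · rintro rfl; exact dominates_nil []

lemma dominates_tail {x : List ℕ} {a1 : ℕ} {ar : List ℕ}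
    (h : Dominates x (a1 :: ar)) : Dominates x ar := by
  obtain ⟨b', hs, hf⟩ := h
  cases hf with
  | cons hy hys =>
    rename_i y ys
    exact ⟨ys, ((List.sublist_cons_self y ys).trans hs), hys⟩

lemma dominates_cons {b1 : ℕ} {br : List ℕ} {a1 : ℕ} {ar : List ℕ} :
    Dominates (b1 :: br) (a1 :: ar) ↔
      (a1 ≤ b1 ∧ Dominates br ar) ∨ (b1 < a1 ∧ Dominates br (a1 :: ar)) := by
  constructor
  · rintro ⟨b', hs, hf⟩
    cases hf with
    | cons hy hys =>
      rename_i y ys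
      rcases le_or_gt a1 b1 with hle | hlt
      · left
        refine ⟨hle, ?_⟩
        cases hs with
        | cons _ h => exact dominates_tail ⟨y :: ys, h, List.Forall₂.cons hy hys⟩
        | cons_cons _ h => exact ⟨ys, h, hys⟩
      · right
        refine ⟨hlt, ?_⟩
        cases hs with
        | cons _ h => exact ⟨y :: ys, h, List.Forall₂.cons hy hys⟩
        | cons_cons _ h => exact absurd hy (by omega)
  · rintro (⟨hle, ⟨ys, hs, hf⟩⟩ | ⟨hlt, ⟨b', hs, hf⟩⟩)
    · exact ⟨b1 :: ys, hs.cons₂ b1, List.Forall₂.cons hle hf⟩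
    · exact ⟨b', hs.trans (List.sublist_cons_self b1 br), hf⟩

lemma isComposition_nil_iff {a : List ℕ} : IsComposition 0 a ↔ a = [] := by
  constructor
  · rintro ⟨h1, h2⟩
    cases a with
    | nil => rfl
    | cons x t =>
      have := h1 x (List.mem_cons_self)
      simp [List.sum_cons] at h2
      omega
  · rintro rfl; exact ⟨by simp, rfl⟩

lemma cnt_zero (a : List ℕ) : cnt 0 a = if a = [] then 1 else 0 := by
  classical
  rcases eq_or_ne a [] with rfl | h
  · simp only [if_pos rfl]
    have : dF 0 [] = {[]} := by
      ext b; simp [mem_dF, isComposition_nil_iff, dominates_nil]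
    simp [cnt, this]
  · rw [if_neg h]
    have : dF 0 a = ∅ := by
      ext b
      simp only [mem_dF, Finset.notMem_empty, iff_false, not_and]
      rintro hc
      rw [isComposition_nil_iff] at hc; subst hc
      rw [nil_dominates]; exact h
    simp [cnt, this]

lemma isComposition_cons {N b1 : ℕ} {br : List ℕ} :
    IsComposition N (b1 :: br) ↔ 0 < b1 ∧ b1 ≤ N ∧ IsComposition (N - b1) br := by
  constructor
  · rintro ⟨h1, h2⟩
    simp only [List.sum_cons] at h2
    have hb1 := h1 b1 (List.mem_cons_self)
    exact ⟨hb1, by omega, fun x hx => h1 x (List.mem_cons_of_mem _ hx), by omega⟩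
  · rintro ⟨h0, h1, h2, h3⟩
    refine ⟨?_, ?_⟩
    · intro x hx
      rcases List.mem_cons.mp hx with rfl | hx
      · exact h0
      · exact h2 x hx
    · simp only [List.sum_cons, h3]; omega

lemma cons_image_injective (i : ℕ) : Function.Injective (fun l : List ℕ => i :: l) := by
  intro x y h; simpa using h

lemma dF_decomp_nil {N : ℕ} (hN : 0 < N) :
    dF N [] = ((Finset.range (N + 1)).filter (fun i => 1 ≤ i)).biUnion
      (fun i => (dF (N - i) []).image (fun l => i :: l)) := by
  ext b
  simp only [mem_dF, Finset.mem_biUnion, Finset.mem_filter, Finset.mem_range, Finset.mem_image]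
  constructor
  · rintro ⟨hc, -⟩
    cases b with
    | nil => exact absurd hc.2 (by simp; omega)
    | cons b1 br =>
      rw [isComposition_cons] at hc
      exact ⟨b1, ⟨by omega, by omega⟩, br, ⟨hc.2.2, dominates_nil br⟩, rfl⟩
  · rintro ⟨i, ⟨hi1, hi2⟩, x, ⟨hx, -⟩, rfl⟩
    exact ⟨isComposition_cons.mpr ⟨by omega, by omega, hx⟩, dominates_nil _⟩

lemma dF_decomp_cons {N a1 : ℕ} {ar : List ℕ} (hN : 0 < N) (ha1 : 0 < a1) :
    dF N (a1 :: ar) =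
      (((Finset.range (N + 1)).filter (fun i => a1 ≤ i)).biUnion
        (fun i => (dF (N - i) ar).image (fun l => i :: l))) ∪
      (((Finset.range (N + 1)).filter (fun i => 1 ≤ i ∧ i < a1)).biUnion
        (fun i => (dF (N - i) (a1 :: ar)).image (fun l => i :: l))) := by
  ext b
  simp only [mem_dF, Finset.mem_union, Finset.mem_biUnion, Finset.mem_filter, Finset.mem_range,
    Finset.mem_image]
  constructor
  · rintro ⟨hc, hd⟩
    cases b with
    | nil => exact absurd hc.2 (by simp; omega)
    | cons b1 br =>
      rw [isComposition_cons] at hc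
      rcases dominates_cons.mp hd with ⟨hle, hdom⟩ | ⟨hlt, hdom⟩
      · exact Or.inl ⟨b1, ⟨by omega, hle⟩, br, ⟨hc.2.2, hdom⟩, rfl⟩
      · exact Or.inr ⟨b1, ⟨by omega, by omega, hlt⟩, br, ⟨hc.2.2, hdom⟩, rfl⟩
  · rintro (⟨i, ⟨hi1, hi2⟩, x, ⟨hx, hdx⟩, rfl⟩ | ⟨i, ⟨hi1, hi2, hi3⟩, x, ⟨hx, hdx⟩, rfl⟩)
    · exact ⟨isComposition_cons.mpr ⟨by omega, by omega, hx⟩,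
        dominates_cons.mpr (Or.inl ⟨hi2, hdx⟩)⟩
    · exact ⟨isComposition_cons.mpr ⟨by omega, by omega, hx⟩,
        dominates_cons.mpr (Or.inr ⟨hi3, hdx⟩)⟩

lemma card_biUnion_cons (s : Finset ℕ) (g : ℕ → Finset (List ℕ)) :
    (s.biUnion (fun i => (g i).image (fun l => i :: l))).card
      = ∑ i ∈ s, (g i).card := by
  rw [Finset.card_biUnion]
  · exact Finset.sum_congr rfl fun i _ =>
      Finset.card_image_of_injective _ (cons_image_injective i)
  · intro x _ y _ hxy
    simp only [Finset.disjoint_left, Finset.mem_image]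
    rintro b ⟨u, -, rfl⟩ ⟨v, -, hv⟩
    exact hxy (by simpa using (List.cons.injEq _ _ _ _ ▸ hv).1.symm)

lemma cnt_nil_rec {N : ℕ} (hN : 0 < N) :
    cnt N [] = ∑ i ∈ Finset.range (N + 1), if 1 ≤ i then cnt (N - i) [] else 0 := by
  rw [cnt, dF_decomp_nil hN, card_biUnion_cons, Finset.sum_filter]; rfl

lemma cnt_cons_rec {N a1 : ℕ} {ar : List ℕ} (hN : 0 < N) (ha1 : 0 < a1) :
    cnt N (a1 :: ar) =
      (∑ i ∈ Finset.range (N + 1), if a1 ≤ i then cnt (N - i) ar else 0) +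
      (∑ i ∈ Finset.range (N + 1), if 1 ≤ i ∧ i < a1 then cnt (N - i) (a1 :: ar) else 0) := by
  have hdisj : Disjoint
      (((Finset.range (N + 1)).filter (fun i => a1 ≤ i)).biUnion
        (fun i => (dF (N - i) ar).image (fun l => i :: l)))
      (((Finset.range (N + 1)).filter (fun i => 1 ≤ i ∧ i < a1)).biUnion
        (fun i => (dF (N - i) (a1 :: ar)).image (fun l => i :: l))) := by
    rw [Finset.disjoint_left]
    simp only [Finset.mem_biUnion, Finset.mem_filter, Finset.mem_range, Finset.mem_image]
    rintro b ⟨i, ⟨hi1, hi2⟩, u, -, rfl⟩ ⟨j, ⟨hj1, hj2, hj3⟩, v, -, hv⟩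
    have : j = i := (List.cons.injEq _ _ _ _ ▸ hv).1
    omega
  rw [cnt, dF_decomp_cons hN ha1, Finset.card_union_of_disjoint hdisj, card_biUnion_cons,
    card_biUnion_cons, Finset.sum_filter, Finset.sum_filter]; rfl

open PowerSeries in
noncomputable def Fser (a : List ℕ) : PowerSeries ℚ :=
  PowerSeries.mk fun N => (cnt N a : ℚ)

noncomputable def hiSer (k : ℕ) : PowerSeries ℚ :=
  PowerSeries.mk fun N => if k ≤ N then 1 else 0

noncomputable def loSer (k : ℕ) : PowerSeries ℚ :=
  PowerSeries.mk fun N => if 1 ≤ N ∧ N < k then 1 else 0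

open PowerSeries

lemma coeff_hi_mul (k N : ℕ) (f : PowerSeries ℚ) :
    (coeff N) (hiSer k * f) =
      ∑ i ∈ Finset.range (N + 1), if k ≤ i then (coeff (N - i)) f else 0 := by
  rw [coeff_mul, Finset.Nat.sum_antidiagonal_eq_sum_range_succ_mk]
  refine Finset.sum_congr rfl fun i _ => ?_
  simp only [hiSer, coeff_mk]
  split <;> simp

lemma coeff_lo_mul (k N : ℕ) (f : PowerSeries ℚ) :
    (coeff N) (loSer k * f) =
      ∑ i ∈ Finset.range (N + 1), if 1 ≤ i ∧ i < k then (coeff (N - i)) f else 0 := by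
  rw [coeff_mul, Finset.Nat.sum_antidiagonal_eq_sum_range_succ_mk]
  refine Finset.sum_congr rfl fun i _ => ?_
  simp only [loSer, coeff_mk]
  split <;> simp

lemma I1 : Fser [] = 1 + hiSer 1 * Fser [] := by
  ext N
  rw [map_add, coeff_hi_mul]
  rcases Nat.eq_zero_or_pos N with rfl | hN
  · simp [Fser, cnt_zero, Finset.filter_singleton]
  · have h1 : (coeff N) (1 : PowerSeries ℚ) = 0 := by
      simp [PowerSeries.coeff_one, Nat.pos_iff_ne_zero.mp hN]
    rw [h1, zero_add]
    simp only [Fser, coeff_mk]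
    rw [cnt_nil_rec hN]
    push_cast [Finset.sum_ite, Finset.sum_const_zero]
    simp [Finset.sum_ite]

lemma I2 {a1 : ℕ} (ha1 : 0 < a1) (ar : List ℕ) :
    Fser (a1 :: ar) = hiSer a1 * Fser ar + loSer a1 * Fser (a1 :: ar) := by
  ext N
  rw [map_add, coeff_hi_mul, coeff_lo_mul]
  rcases Nat.eq_zero_or_pos N with rfl | hN
  · have h0 : ∀ g : ℕ → ℚ, ∑ i ∈ Finset.range (0 + 1), g i = g 0 := fun g => by simp
    rw [h0, h0, if_neg (by omega : ¬ (a1 ≤ 0)), if_neg (by omega : ¬ (1 ≤ 0 ∧ 0 < a1))]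
    simp [Fser, cnt_zero]
  · simp only [Fser, coeff_mk]
    rw [cnt_cons_rec hN ha1]
    push_cast
    congr 1 <;> exact Finset.sum_congr rfl (fun i _ => by split <;> simp)

lemma A2 {k : ℕ} (hk : 0 < k) : (1 - X : PowerSeries ℚ) * hiSer k = X ^ k := by
  ext N
  rw [sub_mul, one_mul, map_sub]
  rcases Nat.eq_zero_or_pos N with rfl | hN
  · rw [mul_comm, PowerSeries.coeff_zero_mul_X]
    simp only [hiSer, coeff_mk, PowerSeries.coeff_X_pow, sub_zero]
    split_ifs <;> (try norm_num) <;> (try omega) <;> simp_all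
  · obtain ⟨M, rfl⟩ := Nat.exists_eq_add_of_lt hN
    rw [zero_add, PowerSeries.coeff_succ_X_mul]
    simp only [hiSer, coeff_mk, PowerSeries.coeff_X_pow]
    split_ifs <;> (try norm_num) <;> (try omega) <;> simp_all

lemma A3 {k : ℕ} (hk : 0 < k) : (1 - X : PowerSeries ℚ) * loSer k = X - X ^ k := by
  ext N
  rw [sub_mul, one_mul, map_sub, map_sub]
  rcases Nat.eq_zero_or_pos N with rfl | hN
  · rw [mul_comm, PowerSeries.coeff_zero_mul_X]
    simp only [loSer, coeff_mk, PowerSeries.coeff_X_pow, PowerSeries.coeff_X, sub_zero]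
    split_ifs <;> (try norm_num) <;> (try omega) <;> simp_all
  · obtain ⟨M, rfl⟩ := Nat.exists_eq_add_of_lt hN
    rw [zero_add, PowerSeries.coeff_succ_X_mul]
    simp only [loSer, coeff_mk, PowerSeries.coeff_X_pow, PowerSeries.coeff_X]
    split_ifs <;> (try norm_num) <;> (try omega) <;> simp_all

/-- the polynomial `1 - 2X + X^k` -/
noncomputable def pP (k : ℕ) : Polynomial ℚ :=
  1 - 2 * Polynomial.X + Polynomial.X ^ k

noncomputable def Pl (a : List ℕ) : Polynomial ℚ := (a.map pP).prod

lemma coe_pP (k : ℕ) : ((pP k : Polynomial ℚ) : PowerSeries ℚ)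
    = 1 - 2 * X + X ^ k := by
  have h2 : ((2 : Polynomial ℚ) : PowerSeries ℚ) = 2 := by
    have : (2 : Polynomial ℚ) = 1 + 1 := by norm_num
    rw [this, Polynomial.coe_add, Polynomial.coe_one]; norm_num
  simp only [pP, Polynomial.coe_add, Polynomial.coe_sub, Polynomial.coe_mul,
    Polynomial.coe_pow, Polynomial.coe_X, Polynomial.coe_one, h2]

lemma step_identity {k : ℕ} (hk : 0 < k) (ar : List ℕ) :
    Fser (k :: ar) * ((pP k : Polynomial ℚ) : PowerSeries ℚ) = X ^ k * Fser ar := by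
  rw [coe_pP]
  have h2 := I2 hk ar
  have h3 := A2 hk
  have h4 := A3 hk
  linear_combination (1 - X : PowerSeries ℚ) * h2 + Fser ar * h3 + Fser (k :: ar) * h4

lemma main_identity : ∀ (a : List ℕ), (∀ x ∈ a, 0 < x) →
    Fser a * ((Pl a : Polynomial ℚ) : PowerSeries ℚ) = X ^ a.sum * Fser [] := by
  intro a
  induction a with
  | nil => intro _; simp [Pl]
  | cons k ar ih =>
    intro h
    have hk : 0 < k := h k (List.mem_cons_self)
    have har : ∀ x ∈ ar, 0 < x := fun x hx => h x (List.mem_cons_of_mem _ hx)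
    have : Pl (k :: ar) = pP k * Pl ar := by simp [Pl]
    rw [this, Polynomial.coe_mul, List.sum_cons, pow_add]
    calc Fser (k :: ar) * (((pP k : Polynomial ℚ) : PowerSeries ℚ)
            * ((Pl ar : Polynomial ℚ) : PowerSeries ℚ))
        = (Fser (k :: ar) * ((pP k : Polynomial ℚ) : PowerSeries ℚ))
            * ((Pl ar : Polynomial ℚ) : PowerSeries ℚ) := by ring
      _ = (X ^ k * Fser ar) * ((Pl ar : Polynomial ℚ) : PowerSeries ℚ) := by
            rw [step_identity hk ar]
      _ = X ^ k * (Fser ar * ((Pl ar : Polynomial ℚ) : PowerSeries ℚ)) := by ring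
      _ = X ^ k * (X ^ ar.sum * Fser []) := by rw [ih har]
      _ = X ^ k * X ^ ar.sum * Fser [] := by ring

lemma F0_identity : Fser [] * (1 - 2 * X : PowerSeries ℚ) = 1 - X := by
  have h1 := I1
  have h3 := A2 (k := 1) Nat.one_pos
  rw [pow_one] at h3
  linear_combination (1 - X : PowerSeries ℚ) * h1 + Fser [] * h3

/-- The multiset of parts of the 2-free integer partition associated to a composition:
each part equal to 2 is replaced by two parts equal to 1 (sorting a list into a weakly
decreasing sequence is recorded by the underlying multiset). -/
def twoFreePartition (a : List ℕ) : Multiset ℕ :=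
  ↑(a.flatMap fun x => if x = 2 then [1, 1] else [x])

def tf (a : List ℕ) : List ℕ := a.flatMap fun x => if x = 2 then [1, 1] else [x]

lemma twoFreePartition_eq (a : List ℕ) : twoFreePartition a = ↑(tf a) := rfl

lemma tf_sum (a : List ℕ) : (tf a).sum = a.sum := by
  induction a with
  | nil => rfl
  | cons x t ih =>
    simp only [tf, List.flatMap_cons, List.sum_append, List.sum_cons] at *
    rcases eq_or_ne x 2 with rfl | hx
    · simp [ih]
    · simp [hx, ih]

lemma pP_two : pP 2 = pP 1 * pP 1 := by
  simp only [pP]; ring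

lemma Pl_tf (a : List ℕ) : Pl (tf a) = Pl a := by
  induction a with
  | nil => rfl
  | cons x t ih =>
    have : Pl (x :: t) = pP x * Pl t := by simp [Pl]
    rw [this, ← ih]
    simp only [tf, List.flatMap_cons, Pl, List.map_append, List.prod_append]
    rcases eq_or_ne x 2 with rfl | hx
    · norm_num [pP_two]
    · simp [hx]

lemma tf_pos {a : List ℕ} (ha : ∀ x ∈ a, 0 < x) : ∀ k ∈ tf a, k = 1 ∨ 3 ≤ k := by
  intro k hk
  simp only [tf, List.mem_flatMap] at hk
  obtain ⟨x, hx, hkx⟩ := hk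
  rcases eq_or_ne x 2 with rfl | h2
  · simp at hkx; omega
  · simp [h2] at hkx
    have := ha x hx
    omega

lemma pP_coeff_zero {k : ℕ} (hk : 0 < k) : (pP k).coeff 0 = 1 := by
  simp [pP, Polynomial.coeff_one, Polynomial.coeff_X_pow, hk.ne]

lemma pP_ne_zero {k : ℕ} (hk : 0 < k) : pP k ≠ 0 := by
  intro h
  have := pP_coeff_zero hk
  rw [h] at this
  simp at this

lemma Pl_coeff_zero {a : List ℕ} (ha : ∀ x ∈ a, 0 < x) : (Pl a).coeff 0 = 1 := by
  induction a with
  | nil => simp [Pl]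
  | cons x t ih =>
    have : Pl (x :: t) = pP x * Pl t := by simp [Pl]
    rw [this, Polynomial.mul_coeff_zero, pP_coeff_zero (ha x (by simp)),
      ih (fun y hy => ha y (List.mem_cons_of_mem _ hy)), one_mul]

lemma Pl_ne_zero {a : List ℕ} (ha : ∀ x ∈ a, 0 < x) : Pl a ≠ 0 := by
  intro h
  have := Pl_coeff_zero ha
  rw [h] at this; simp at this

lemma Fser_nil_ne_zero : Fser [] ≠ 0 := by
  intro h
  have : (coeff 0) (Fser []) = 1 := by simp [Fser, cnt_zero]
  rw [h] at this; simp at this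

lemma cnt_eq_of_tf_eq {a a' : List ℕ} (ha : ∀ x ∈ a, 0 < x) (ha' : ∀ x ∈ a', 0 < x)
    (hM : twoFreePartition a = twoFreePartition a') : ∀ N, cnt N a = cnt N a' := by
  have hPl : Pl a = Pl a' := by
    rw [← Pl_tf a, ← Pl_tf a']
    have : (↑(tf a) : Multiset ℕ) = ↑(tf a') := by
      rw [← twoFreePartition_eq, ← twoFreePartition_eq, hM]
    have hperm : (tf a).Perm (tf a') := Multiset.coe_eq_coe.mp this
    simp only [Pl]
    exact List.Perm.prod_eq (hperm.map pP)
  have hsum : a.sum = a'.sum := by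
    rw [← tf_sum a, ← tf_sum a']
    have : (↑(tf a) : Multiset ℕ) = ↑(tf a') := by
      rw [← twoFreePartition_eq, ← twoFreePartition_eq, hM]
    have hperm : (tf a).Perm (tf a') := Multiset.coe_eq_coe.mp this
    exact hperm.sum_eq
  have e1 := main_identity a ha
  have e2 := main_identity a' ha'
  rw [hPl, hsum] at e1
  rw [← e2] at e1
  have hC : ((Pl a' : Polynomial ℚ) : PowerSeries ℚ) ≠ 0 := by
    intro h
    exact Pl_ne_zero ha' (Polynomial.coe_inj.mp (by rw [h]; simp))
  have hF : Fser a = Fser a' := mul_right_cancel₀ hC e1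
  intro N
  have : (coeff N) (Fser a) = (coeff N) (Fser a') := by rw [hF]
  simp only [Fser, coeff_mk] at this
  exact_mod_cast this

lemma Pl_eq_of_cnt_eq {a a' : List ℕ} (ha : ∀ x ∈ a, 0 < x) (ha' : ∀ x ∈ a', 0 < x)
    (hane : a ≠ []) (ha'ne : a' ≠ [])
    (hc : ∀ N, cnt N a = cnt N a') : a.sum = a'.sum ∧ Pl a = Pl a' := by
  have hF : Fser a = Fser a' := by
    ext N; simp only [Fser, coeff_mk]; exact_mod_cast hc N
  have e1 := main_identity a ha
  have e2 := main_identity a' ha'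
  -- X^{sa} * F0 * Pl a' = X^{sa'} * F0 * Pl a
  have key : (X : PowerSeries ℚ) ^ a.sum * Fser [] * ((Pl a' : Polynomial ℚ) : PowerSeries ℚ)
      = (X : PowerSeries ℚ) ^ a'.sum * Fser [] * ((Pl a : Polynomial ℚ) : PowerSeries ℚ) := by
    calc (X : PowerSeries ℚ) ^ a.sum * Fser [] * ((Pl a' : Polynomial ℚ) : PowerSeries ℚ)
        = (Fser a * ((Pl a : Polynomial ℚ) : PowerSeries ℚ))
            * ((Pl a' : Polynomial ℚ) : PowerSeries ℚ) := by rw [e1]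
      _ = (Fser a' * ((Pl a' : Polynomial ℚ) : PowerSeries ℚ))
            * ((Pl a : Polynomial ℚ) : PowerSeries ℚ) := by rw [hF]; ring
      _ = (X : PowerSeries ℚ) ^ a'.sum * Fser [] * ((Pl a : Polynomial ℚ) : PowerSeries ℚ) := by
            rw [e2]
  -- rearrange to isolate: X^{sa} * Pl a' = X^{sa'} * Pl a
  have key2 : (X : PowerSeries ℚ) ^ a.sum * ((Pl a' : Polynomial ℚ) : PowerSeries ℚ)
      = (X : PowerSeries ℚ) ^ a'.sum * ((Pl a : Polynomial ℚ) : PowerSeries ℚ) := by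
    have := key
    have hF0 := Fser_nil_ne_zero
    apply mul_left_cancel₀ hF0
    calc Fser [] * ((X : PowerSeries ℚ) ^ a.sum * ((Pl a' : Polynomial ℚ) : PowerSeries ℚ))
        = (X : PowerSeries ℚ) ^ a.sum * Fser [] * ((Pl a' : Polynomial ℚ) : PowerSeries ℚ) := by
          ring
      _ = (X : PowerSeries ℚ) ^ a'.sum * Fser [] * ((Pl a : Polynomial ℚ) : PowerSeries ℚ) := this
      _ = Fser [] * ((X : PowerSeries ℚ) ^ a'.sum * ((Pl a : Polynomial ℚ) : PowerSeries ℚ)) := by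
          ring
  -- compare orders to get sum equality
  have hconst : ∀ (l : List ℕ), (∀ x ∈ l, 0 < x) →
      (coeff 0) ((Pl l : Polynomial ℚ) : PowerSeries ℚ) = 1 := by
    intro l hl
    rw [Polynomial.coeff_coe]
    exact_mod_cast Pl_coeff_zero hl
  have hsum : a.sum = a'.sum := by
    by_contra hne
    rcases Nat.lt_or_ge a.sum a'.sum with hlt | hge
    · have h1 : (coeff a.sum) ((X : PowerSeries ℚ) ^ a.sum
          * ((Pl a' : Polynomial ℚ) : PowerSeries ℚ)) = 1 := by
        have := PowerSeries.coeff_X_pow_mul ((Pl a' : Polynomial ℚ) : PowerSeries ℚ) a.sum 0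
        rw [zero_add] at this
        rw [this, hconst a' ha']
      have h2 : (coeff a.sum) ((X : PowerSeries ℚ) ^ a'.sum
          * ((Pl a : Polynomial ℚ) : PowerSeries ℚ)) = 0 := by
        have hdvd : (X : PowerSeries ℚ) ^ a'.sum ∣ (X : PowerSeries ℚ) ^ a'.sum
            * ((Pl a : Polynomial ℚ) : PowerSeries ℚ) := Dvd.intro _ rfl
        exact (PowerSeries.X_pow_dvd_iff.mp hdvd) a.sum hlt
      rw [key2, h2] at h1
      norm_num at h1
    · have hlt : a'.sum < a.sum := by omega
      have h1 : (coeff a'.sum) ((X : PowerSeries ℚ) ^ a'.sum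
          * ((Pl a : Polynomial ℚ) : PowerSeries ℚ)) = 1 := by
        have := PowerSeries.coeff_X_pow_mul ((Pl a : Polynomial ℚ) : PowerSeries ℚ) a'.sum 0
        rw [zero_add] at this
        rw [this, hconst a ha]
      have h2 : (coeff a'.sum) ((X : PowerSeries ℚ) ^ a.sum
          * ((Pl a' : Polynomial ℚ) : PowerSeries ℚ)) = 0 := by
        have hdvd : (X : PowerSeries ℚ) ^ a.sum ∣ (X : PowerSeries ℚ) ^ a.sum
            * ((Pl a' : Polynomial ℚ) : PowerSeries ℚ) := Dvd.intro _ rfl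
        exact (PowerSeries.X_pow_dvd_iff.mp hdvd) a'.sum hlt
      rw [← key2, h2] at h1
      norm_num at h1
  refine ⟨hsum, ?_⟩
  rw [hsum] at key2
  have hXpow : (X : PowerSeries ℚ) ^ a'.sum ≠ 0 := pow_ne_zero _ PowerSeries.X_ne_zero
  have := mul_left_cancel₀ hXpow key2
  exact (Polynomial.coe_inj.mp this).symm

noncomputable def qP (k : ℕ) : Polynomial ℚ :=
  1 - ∑ i ∈ Finset.Ico 1 k, Polynomial.X ^ i

lemma pP_fact {k : ℕ} (hk : 0 < k) : (1 - Polynomial.X) * qP k = pP k := by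
  induction k with
  | zero => omega
  | succ n ih =>
    rcases Nat.eq_zero_or_pos n with rfl | hn
    · simp only [qP, pP]
      norm_num
      ring
    · have hq : qP (n + 1) = qP n - Polynomial.X ^ n := by
        simp only [qP, Finset.sum_Ico_succ_top (by omega : 1 ≤ n)]
        ring
      have hp : pP (n + 1) = pP n - Polynomial.X ^ n + Polynomial.X ^ (n + 1) := by
        simp only [pP]; ring
      rw [hq, mul_sub, ih hn, hp]
      ring

lemma qP_eval_one (k : ℕ) : (qP k).eval 1 = 1 - ((k - 1 : ℕ) : ℚ) := by
  simp only [qP, Polynomial.eval_sub, Polynomial.eval_one, Polynomial.eval_finset_sum,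
    Polynomial.eval_pow, Polynomial.eval_X, one_pow, Finset.sum_const, Nat.card_Ico]
  rw [nsmul_eq_mul, mul_one]

lemma qP_eval_one_ne_zero {k : ℕ} (hk : k = 1 ∨ 3 ≤ k) : (qP k).eval 1 ≠ 0 := by
  rw [qP_eval_one]
  rcases hk with rfl | hk
  · norm_num
  · have h1 : ((k - 1 : ℕ) : ℚ) ≥ 2 := by
      have : (2 : ℕ) ≤ k - 1 := by omega
      exact_mod_cast Nat.cast_le.mpr this
    intro h
    have : ((k - 1 : ℕ) : ℚ) = 1 := by linarith
    linarith

lemma rm_pP {k : ℕ} (hk : k = 1 ∨ 3 ≤ k) :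
    Polynomial.rootMultiplicity 1 (pP k) = 1 := by
  have hkpos : 0 < k := by omega
  have hfact := pP_fact hkpos
  have hq_ne : qP k ≠ 0 := fun h => qP_eval_one_ne_zero hk (by rw [h]; simp)
  have h1X : (1 - Polynomial.X : Polynomial ℚ) = (-1 : Polynomial ℚ) * (Polynomial.X - Polynomial.C 1) := by
    rw [Polynomial.C_1]; ring
  have hne : (1 - Polynomial.X : Polynomial ℚ) * qP k ≠ 0 := by
    rw [hfact]; exact pP_ne_zero hkpos
  rw [← hfact, Polynomial.rootMultiplicity_mul hne]
  have hrm1 : Polynomial.rootMultiplicity 1 (1 - Polynomial.X : Polynomial ℚ) = 1 := by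
    rw [h1X, Polynomial.rootMultiplicity_mul (by rw [← h1X]; intro h; simp only [h] at hne; exact hne (zero_mul _))]
    rw [Polynomial.rootMultiplicity_X_sub_C_self]
    have : Polynomial.rootMultiplicity 1 (-1 : Polynomial ℚ) = 0 :=
      Polynomial.rootMultiplicity_eq_zero (by simp [Polynomial.IsRoot])
    omega
  have hrmq : Polynomial.rootMultiplicity 1 (qP k) = 0 :=
    Polynomial.rootMultiplicity_eq_zero (qP_eval_one_ne_zero hk)
  omega

noncomputable def PM (M : Multiset ℕ) : Polynomial ℚ := (M.map pP).prod

lemma PM_coe (l : List ℕ) : PM ↑l = Pl l := by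
  simp [PM, Pl]

lemma PM_ne_zero {M : Multiset ℕ} (hM : ∀ k ∈ M, 0 < k) : PM M ≠ 0 := by
  apply Multiset.prod_ne_zero
  intro h0
  obtain ⟨k, hk, hpk⟩ := Multiset.mem_map.mp h0
  exact pP_ne_zero (hM k hk) hpk

lemma rm_PM {M : Multiset ℕ} (hM : ∀ k ∈ M, k = 1 ∨ 3 ≤ k) :
    Polynomial.rootMultiplicity 1 (PM M) = Multiset.card M := by
  induction M using Multiset.induction_on with
  | empty =>
    simp only [PM, Multiset.map_zero, Multiset.prod_zero, Multiset.card_zero]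
    exact Polynomial.rootMultiplicity_eq_zero (by simp [Polynomial.IsRoot])
  | cons k M ih =>
    have hk := hM k (Multiset.mem_cons_self k M)
    have hM' : ∀ x ∈ M, x = 1 ∨ 3 ≤ x := fun x hx => hM x (Multiset.mem_cons_of_mem hx)
    have hPM : PM (k ::ₘ M) = pP k * PM M := by
      simp [PM, Multiset.map_cons, Multiset.prod_cons]
    have hne : pP k * PM M ≠ 0 :=
      mul_ne_zero (pP_ne_zero (by omega)) (PM_ne_zero (fun x hx => by rcases hM' x hx with rfl | h <;> omega))
    rw [hPM, Polynomial.rootMultiplicity_mul hne, rm_pP hk, ih hM']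
    simp [Multiset.card_cons]
    omega

lemma PM_coeff_zero {M : Multiset ℕ} (hM : ∀ k ∈ M, 0 < k) : (PM M).coeff 0 = 1 := by
  induction M using Multiset.induction_on with
  | empty => simp [PM]
  | cons k M ih =>
    have : PM (k ::ₘ M) = pP k * PM M := by simp [PM]
    rw [this, Polynomial.mul_coeff_zero, pP_coeff_zero (hM k (Multiset.mem_cons_self k M)),
      ih (fun x hx => hM x (Multiset.mem_cons_of_mem hx)), one_mul]

lemma Bpow_coeff_zero (m : ℕ) : ((1 - 2 * Polynomial.X : Polynomial ℚ) ^ m).coeff 0 = 1 := by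
  rw [Polynomial.coeff_zero_eq_eval_zero]
  simp

lemma pP_split (k : ℕ) : pP k = (1 - 2 * Polynomial.X) + Polynomial.X ^ k := by
  simp only [pP]

lemma coeff_B_mul (Q : Polynomial ℚ) (j : ℕ) (hj : 0 < j) :
    ((1 - 2 * Polynomial.X) * Q).coeff j = Q.coeff j - 2 * Q.coeff (j - 1) := by
  obtain ⟨i, rfl⟩ : ∃ i, j = i + 1 := ⟨j - 1, by omega⟩
  rw [sub_mul, one_mul, mul_assoc, Polynomial.coeff_sub]
  congr 1
  rw [Polynomial.coeff_ofNat_mul, Polynomial.coeff_X_mul]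
  simp

lemma C3 (M : Multiset ℕ) (hpos : ∀ k ∈ M, 0 < k) (k0 : ℕ) (hk0 : 0 < k0)
    (hmin : ∀ k ∈ M, k0 ≤ k) :
    (∀ j, 0 < j → j < k0 →
        (PM M).coeff j = ((1 - 2 * Polynomial.X : Polynomial ℚ) ^ Multiset.card M).coeff j) ∧
      (PM M).coeff k0 =
        ((1 - 2 * Polynomial.X : Polynomial ℚ) ^ Multiset.card M).coeff k0 + M.count k0 := by
  induction M using Multiset.induction_on with
  | empty => simp [PM]
  | cons k M ih =>
    have hkmem := Multiset.mem_cons_self k M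
    have hkpos : 0 < k := hpos k hkmem
    have hkmin : k0 ≤ k := hmin k hkmem
    have hpos' : ∀ x ∈ M, 0 < x := fun x hx => hpos x (Multiset.mem_cons_of_mem hx)
    have hmin' : ∀ x ∈ M, k0 ≤ x := fun x hx => hmin x (Multiset.mem_cons_of_mem hx)
    obtain ⟨ih1, ih2⟩ := ih hpos' hmin'
    have hsplit : PM (k ::ₘ M) = (1 - 2 * Polynomial.X) * PM M + Polynomial.X ^ k * PM M := by
      have : PM (k ::ₘ M) = pP k * PM M := by simp [PM]
      rw [this, pP_split, add_mul]
    have hXcoeff : ∀ j, j ≤ k0 → (Polynomial.X ^ k * PM M).coeff j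
        = if j = k then 1 else 0 := by
      intro j hj
      rw [mul_comm, Polynomial.coeff_mul_X_pow']
      by_cases h : k ≤ j
      · have : j = k := by omega
        rw [if_pos h, if_pos this, this, Nat.sub_self, PM_coeff_zero hpos']
      · rw [if_neg h, if_neg (by omega)]
    have hBrec : ∀ j, 0 < j →
        ((1 - 2 * Polynomial.X : Polynomial ℚ) ^ (Multiset.card M + 1)).coeff j
          = ((1 - 2 * Polynomial.X : Polynomial ℚ) ^ Multiset.card M).coeff j
            - 2 * ((1 - 2 * Polynomial.X : Polynomial ℚ) ^ Multiset.card M).coeff (j - 1) := by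
      intro j hj
      rw [pow_succ, mul_comm ((1 - 2 * Polynomial.X : Polynomial ℚ) ^ Multiset.card M) _,
        coeff_B_mul _ j hj]
    have hcoeff_low : ∀ j, 0 < j → j ≤ k0 →
        (PM M).coeff (j - 1) = ((1 - 2 * Polynomial.X : Polynomial ℚ) ^ Multiset.card M).coeff (j - 1) := by
      intro j hj hjk
      rcases Nat.eq_zero_or_pos (j - 1) with h0 | hpos0
      · rw [h0, PM_coeff_zero hpos', Bpow_coeff_zero]
      · exact ih1 (j - 1) hpos0 (by omega)
    constructor
    · intro j hj hjk
      rw [hsplit, Polynomial.coeff_add, coeff_B_mul _ j hj, hXcoeff j (by omega),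
        if_neg (by omega), add_zero, Multiset.card_cons, hBrec j hj,
        ih1 j hj hjk, hcoeff_low j hj (by omega)]
    · rw [hsplit, Polynomial.coeff_add, coeff_B_mul _ k0 hk0, hXcoeff k0 le_rfl,
        Multiset.card_cons, hBrec k0 hk0, ih2, hcoeff_low k0 hk0 le_rfl,
        Multiset.count_cons]
      by_cases hkk : k0 = k
      · rw [if_pos hkk, if_pos hkk]
        push_cast
        ring
      · rw [if_neg hkk, if_neg hkk]
        push_cast
        ring

lemma U : ∀ (n : ℕ) (M M' : Multiset ℕ), Multiset.card M = n →
    (∀ k ∈ M, k = 1 ∨ 3 ≤ k) → (∀ k ∈ M', k = 1 ∨ 3 ≤ k) →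
    PM M = PM M' → M = M' := by
  intro n
  induction n with
  | zero =>
    intro M M' hcard hM hM' hPM
    have hM0 : M = 0 := Multiset.card_eq_zero.mp hcard
    have hcard' : Multiset.card M' = 0 := by
      have := rm_PM hM'
      rw [← hPM, rm_PM hM, hcard] at this
      omega
    rw [hM0, Multiset.card_eq_zero.mp hcard']
  | succ n ih =>
    intro M M' hcard hM hM' hPM
    have hcard' : Multiset.card M' = n + 1 := by
      have := rm_PM hM'
      rw [← hPM, rm_PM hM, hcard] at this
      omega
    have hMne : M ≠ 0 := by
      intro h; rw [h] at hcard; simp at hcard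
    obtain ⟨x, hx⟩ := Multiset.exists_mem_of_ne_zero hMne
    have hS : ∃ k, k ∈ M + M' := ⟨x, Multiset.mem_add.mpr (Or.inl hx)⟩
    set k0 := Nat.find hS with hk0def
    have hk0mem : k0 ∈ M + M' := Nat.find_spec hS
    have hmin : ∀ k ∈ M + M', k0 ≤ k := fun k hk =>
      le_of_not_gt (fun h => Nat.find_min hS h hk)
    have hminM : ∀ k ∈ M, k0 ≤ k := fun k hk => hmin k (Multiset.mem_add.mpr (Or.inl hk))
    have hminM' : ∀ k ∈ M', k0 ≤ k := fun k hk => hmin k (Multiset.mem_add.mpr (Or.inr hk))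
    have hposM : ∀ k ∈ M, 0 < k := fun k hk => by rcases hM k hk with rfl | h <;> omega
    have hposM' : ∀ k ∈ M', 0 < k := fun k hk => by rcases hM' k hk with rfl | h <;> omega
    have hk0pos : 0 < k0 := by
      rcases Multiset.mem_add.mp hk0mem with h | h
      · exact hposM _ h
      · exact hposM' _ h
    have h1 := (C3 M hposM k0 hk0pos hminM).2
    have h2 := (C3 M' hposM' k0 hk0pos hminM').2
    rw [hPM, hcard] at h1
    -- h1 : coeff k0 (PM M') = coeff k0 (B ^ (n+1)) + count k0 M
    -- h2 : coeff k0 (PM M') = coeff k0 (B ^ card M') + count k0 M'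
    rw [hcard'] at h2
    have hcnt : M.count k0 = M'.count k0 := by
      have : (M.count k0 : ℚ) = M'.count k0 := by
        have := h1.symm.trans h2
        exact add_left_cancel this
      exact_mod_cast this
    have hk0M : k0 ∈ M ∧ k0 ∈ M' := by
      rcases Multiset.mem_add.mp hk0mem with h | h
      · have : 0 < M.count k0 := Multiset.count_pos.mpr h
        exact ⟨h, Multiset.count_pos.mp (hcnt ▸ this)⟩
      · have : 0 < M'.count k0 := Multiset.count_pos.mpr h
        exact ⟨Multiset.count_pos.mp (hcnt ▸ this), h⟩
    have hprodM : pP k0 * PM (M.erase k0) = PM M := Multiset.prod_map_erase hk0M.1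
    have hprodM' : pP k0 * PM (M'.erase k0) = PM M' := Multiset.prod_map_erase hk0M.2
    have hPMerase : PM (M.erase k0) = PM (M'.erase k0) := by
      apply mul_left_cancel₀ (pP_ne_zero hk0pos)
      rw [hprodM, hprodM', hPM]
    have herase : M.erase k0 = M'.erase k0 := by
      apply ih
      · rw [Multiset.card_erase_of_mem hk0M.1, hcard]; rfl
      · exact fun k hk => hM k (Multiset.mem_of_mem_erase hk)
      · exact fun k hk => hM' k (Multiset.mem_of_mem_erase hk)
      · exact hPMerase
    calc M = k0 ::ₘ M.erase k0 := (Multiset.cons_erase hk0M.1).symm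
      _ = k0 ::ₘ M'.erase k0 := by rw [herase]
      _ = M' := Multiset.cons_erase hk0M.2

theorem domEquiv_iff_twoFree_eq (a a' : List ℕ)
    (ha : ∀ x ∈ a, 0 < x) (ha' : ∀ x ∈ a', 0 < x)
    (hane : a ≠ []) (ha'ne : a' ≠ []) :
    (∀ N : ℕ, 0 < N → (domSet N a).ncard = (domSet N a').ncard) ↔
      twoFreePartition a = twoFreePartition a' := by
  constructor
  · intro h
    have hc : ∀ N, cnt N a = cnt N a' := by
      intro N
      rcases Nat.eq_zero_or_pos N with rfl | hN
      · rw [cnt_zero, cnt_zero, if_neg hane, if_neg ha'ne]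
      · have := h N hN
        rwa [ncard_domSet, ncard_domSet] at this
    obtain ⟨hsum, hPl⟩ := Pl_eq_of_cnt_eq ha ha' hane ha'ne hc
    have hPM : PM (twoFreePartition a) = PM (twoFreePartition a') := by
      rw [twoFreePartition_eq, twoFreePartition_eq, PM_coe, PM_coe, Pl_tf, Pl_tf, hPl]
    refine U (Multiset.card (twoFreePartition a)) _ _ rfl ?_ ?_ hPM
    · intro k hk
      rw [twoFreePartition_eq, Multiset.mem_coe] at hk
      exact tf_pos ha k hk
    · intro k hk
      rw [twoFreePartition_eq, Multiset.mem_coe] at hk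
      exact tf_pos ha' k hk
  · intro hM N _
    rw [ncard_domSet, ncard_domSet]
    exact cnt_eq_of_tf_eq ha ha' hM N
end
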